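/- arXiv:2407.05039 — 4 statements merged into one kernel-verified Lean document; each statement's English description precedes it below -/
import Mathlib

section
/- Fix an open set A ⊂ ℝⁿ and a Lipschitz function φ : A → ℝ of class C¹ with |∇φ(x)| > 0 for all x ∈ A, and set A_r = φ⁻¹((−∞,r)). Then for every f ∈ BV(A), for Lebesgue-a.e. r ∈ ℝ and ℋ^{n−1}-a.e. x ∈ ∂A_r ∩ A, one has f(x) = Tr⁺(f, ∂A_r)(x) = Tr⁻(f, ∂A_r)(x). -/
open MeasureTheory Metric Set Filter
open scoped Topology ENNReal NNReal RealInnerProductSpace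

noncomputable section

abbrev Eucl (n : ℕ) : Type := EuclideanSpace ℝ (Fin n)

/-- Divergence of a vector field on `Eucl n`. -/
def diverg {n : ℕ} (Φ : Eucl n → Eucl n) (x : Eucl n) : ℝ :=
  ∑ i, fderiv ℝ Φ x (EuclideanSpace.single i 1) i

/-- Total variation `|Df|(U)` of `f` on the set `U`, defined by duality with
compactly supported `C¹` vector fields bounded by one. -/
def totalVariation {n : ℕ} (f : Eucl n → ℝ) (U : Set (Eucl n)) : ℝ≥0∞ :=
  ⨆ Φ : {Φ : Eucl n → Eucl n // ContDiff ℝ 1 Φ ∧ HasCompactSupport Φ ∧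
      tsupport Φ ⊆ U ∧ ∀ x, ‖Φ x‖ ≤ 1},
    ENNReal.ofReal (∫ x in U, f x * diverg Φ.1 x)

/-- `f ∈ BV(U)`: `f` is integrable on `U` with finite total variation in `U`. -/
def MemBV {n : ℕ} (f : Eucl n → ℝ) (U : Set (Eucl n)) : Prop :=
  IntegrableOn f U volume ∧ totalVariation f U < ⊤

/-- `f ∈ BV_loc(Ω)`: `f ∈ BV(Ω ∩ A)` for every bounded open set `A ⊆ ℝⁿ`. -/
def MemBVloc {n : ℕ} (f : Eucl n → ℝ) (Ω : Set (Eucl n)) : Prop :=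
  ∀ A : Set (Eucl n), IsOpen A → Bornology.IsBounded A → MemBV f (Ω ∩ A)

/-- Perimeter `P(E;U) = |D1_E|(U)` of a set `E` in `U`. -/
def perim {n : ℕ} (E U : Set (Eucl n)) : ℝ≥0∞ :=
  totalVariation (Set.indicator E fun _ => (1 : ℝ)) U

/-- `K ⊂⊂ A` : `K` is compactly contained in `A`. -/
def CptIn {n : ℕ} (K A : Set (Eucl n)) : Prop :=
  IsCompact (closure K) ∧ closure K ⊆ A

/-- The minimality gap `Ψ_Ω(f;A)` of a function `f` in `A`, relative to `Ω`. -/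
def minGap {n : ℕ} (Ω A : Set (Eucl n)) (f : Eucl n → ℝ) : ℝ≥0∞ :=
  totalVariation f (Ω ∩ A) -
    ⨅ g : {g : Eucl n → ℝ // MemBVloc g Ω ∧ CptIn (tsupport (g - f)) A},
      totalVariation g.1 (Ω ∩ A)

/-- The minimality gap `Ψ_Ω(E;A)` of a set `E` in `A`, relative to `Ω`. -/
def minGapSet {n : ℕ} (Ω A E : Set (Eucl n)) : ℝ≥0∞ :=
  minGap Ω A (Set.indicator E fun _ => (1 : ℝ))

/-- `T` is a trace of `f` on `Γ` computed from the domain `D`, with respect to the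
`d`-dimensional Hausdorff measure: for `ℋ^d`-a.e. `x ∈ Γ`, the averages of `|T x − f|`
over `B_r(x) ∩ D` tend to `0` as `r → 0⁺`. -/
def IsTraceOn {n : ℕ} (d : ℝ) (D : Set (Eucl n)) (f T : Eucl n → ℝ) (Γ : Set (Eucl n)) : Prop :=
  ∀ᵐ x ∂((μH[d] : Measure (Eucl n)).restrict Γ),
    Tendsto (fun r : ℝ =>
        (volume (ball x r ∩ D)).toReal⁻¹ * ∫ y in ball x r ∩ D, |T x - f y|)
      (𝓝[>] (0:ℝ)) (𝓝 0)

section AuxTraceLemmas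

set_option maxHeartbeats 1000000

theorem aux_mkMetric_le_liminf_tsum' {X : Type*} [EMetricSpace X] [MeasurableSpace X] [BorelSpace X]
    {β : Type*} {ι : β → Type*} [∀ n, Countable (ι n)] (s : Set X)
    {l : Filter β} (r : β → ℝ≥0∞) (hr : Tendsto r l (𝓝 0)) (t : ∀ n : β, ι n → Set X)
    (ht : ∀ᶠ n in l, ∀ i, EMetric.diam (t n i) ≤ r n) (hst : ∀ᶠ n in l, s ⊆ ⋃ i, t n i)
    (m : ℝ≥0∞ → ℝ≥0∞) :
    MeasureTheory.Measure.mkMetric m s ≤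
      liminf (fun n => ∑' i, ⨆ _ : (t n i).Nonempty, m (EMetric.diam (t n i))) l := by
  haveI : ∀ n, Encodable (ι n) := fun n => Encodable.ofCountable _
  simp only [MeasureTheory.Measure.mkMetric_apply]
  refine iSup₂_le fun ε hε => ?_
  refine le_of_forall_gt_imp_ge_of_dense fun c hc => ?_
  rcases ((frequently_lt_of_liminf_lt (by isBoundedDefault) hc).and_eventually
        ((hr.eventually (gt_mem_nhds hε)).and (ht.and hst))).exists with
    ⟨n, hn, hrn, htn, hstn⟩
  set u : ℕ → Set X := fun j => ⋃ b ∈ Encodable.decode₂ (ι n) j, t n b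
  refine iInf₂_le_of_le u (by rwa [Encodable.iUnion_decode₂]) ?_
  refine iInf_le_of_le (fun j => ?_) ?_
  · rw [EMetric.diam_iUnion_mem_option]
    exact iSup₂_le fun _ _ => (htn _).trans hrn.le
  · calc
      (∑' j : ℕ, ⨆ _ : (u j).Nonempty, m (EMetric.diam (u j))) = _ :=
        tsum_iUnion_decode₂ (fun t : Set X => ⨆ _ : t.Nonempty, m (EMetric.diam t)) (by simp) _
      _ ≤ c := hn.le

theorem aux_eilenberg_cov {n : ℕ} {A S : Set (Eucl n)} (hSA : S ⊆ A)
    {φ : Eucl n → ℝ} {L : ℝ≥0} (hφ : LipschitzOnWith L φ A) (hS0 : volume S = 0) :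
    ∀ k : ℕ, ∃ (t : Set (Eucl n)) (ρ : Eucl n → ℝ), t.Countable ∧ t ⊆ S ∧
      (∀ x ∈ t, ρ x ∈ Ioo (0:ℝ) ((k+1:ℕ):ℝ)⁻¹) ∧ (S ⊆ ⋃ x ∈ t, closedBall x (ρ x)) ∧
      (∑' x : t, volume (closedBall (x : Eucl n) (ρ x))) ≤ ((k+1:ℕ):ℝ≥0∞)⁻¹ := by
  intro k
  have hpos : (0:ℝ) < ((k+1:ℕ):ℝ)⁻¹ := by positivity
  obtain ⟨t, ρ, h1, h2, h3, h4, h5⟩ := Besicovitch.exists_closedBall_covering_tsum_measure_le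
    (volume : Measure (Eucl n)) (ε := ((k+1:ℕ):ℝ≥0∞)⁻¹) (by simp)
    (fun _ => Ioo (0:ℝ) ((k+1:ℕ):ℝ)⁻¹) S
    (fun x _ δ hδ => ⟨min (δ/2) (((k+1:ℕ):ℝ)⁻¹/2),
      ⟨⟨by positivity, (min_le_right _ _).trans_lt (half_lt_self hpos)⟩,
        by positivity, (min_le_left _ _).trans_lt (half_lt_self hδ)⟩⟩)
  exact ⟨t, ρ, h1, h2, h3, h4, by simpa [hS0] using h5⟩

theorem aux_eilenberg_claim1 {n : ℕ} (hn : 0 < n) {A S : Set (Eucl n)} (hSA : S ⊆ A)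
    {φ : Eucl n → ℝ} {L : ℝ≥0} (hφ : LipschitzOnWith L φ A)
    (t : ℕ → Set (Eucl n)) (ρ : ℕ → Eucl n → ℝ) (tcount : ∀ k, (t k).Countable)
    (tS : ∀ k, t k ⊆ S)
    (hρ : ∀ k, ∀ x ∈ t k, ρ k x ∈ Ioo (0:ℝ) ((k+1:ℕ):ℝ)⁻¹)
    (hcov : ∀ k, S ⊆ ⋃ x ∈ t k, closedBall x (ρ k x)) (r : ℝ) :
    μH[(n:ℝ)-1] (S ∩ φ ⁻¹' {r}) ≤ liminf (fun k => ∑' x : t k,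
      (Icc (φ x - L * ρ k x) (φ x + L * ρ k x)).indicator
        (fun _ => ENNReal.ofReal (2 * ρ k x) ^ ((n:ℝ)-1)) r) atTop := by
  haveI : ∀ k, Countable (t k) := fun k => (tcount k).to_subtype
  have hd0 : (0:ℝ) ≤ (n:ℝ) - 1 := by
    have : (1:ℝ) ≤ (n:ℝ) := by exact_mod_cast hn
    linarith
  set T : ∀ k : ℕ, (t k) → Set (Eucl n) :=
    fun k x => closedBall (x:Eucl n) (ρ k x) ∩ (S ∩ φ ⁻¹' {r}) with hT
  have step : μH[(n:ℝ)-1] (S ∩ φ ⁻¹' {r}) ≤ liminf (fun k => ∑' x : t k,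
      ⨆ _ : (T k x).Nonempty, (EMetric.diam (T k x)) ^ ((n:ℝ)-1)) atTop := by
    refine aux_mkMetric_le_liminf_tsum' _ (fun k => ENNReal.ofReal (2 * ((k+1:ℕ):ℝ)⁻¹)) ?_ T ?_ ?_ _
    · have : Tendsto (fun k : ℕ => 2 * ((k+1:ℕ):ℝ)⁻¹) atTop (𝓝 (2 * 0)) :=
        tendsto_const_nhds.mul
          ((tendsto_inv_atTop_zero.comp (tendsto_natCast_atTop_atTop.comp
            (tendsto_add_atTop_nat 1))))
      simpa using (ENNReal.tendsto_ofReal this)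
    · refine Eventually.of_forall fun k x => ?_
      refine le_trans (EMetric.diam_mono (inter_subset_left)) ?_
      have h1 : (0:ℝ) ≤ ρ k x := (hρ k x x.2).1.le
      rw [← Metric.emetric_closedBall h1]
      refine le_trans EMetric.diam_closedBall ?_
      show 2 * ENNReal.ofReal (ρ k ↑x) ≤ ENNReal.ofReal (2 * ((k+1:ℕ):ℝ)⁻¹)
      rw [ENNReal.ofReal_mul (by norm_num : (0:ℝ) ≤ 2), ENNReal.ofReal_ofNat]
      gcongr
      exact (hρ k x x.2).2.le
    · refine Eventually.of_forall fun k => ?_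
      intro y hy
      obtain ⟨x, hx, hyx⟩ := mem_iUnion₂.1 (hcov k hy.1)
      exact mem_iUnion.2 ⟨⟨x, hx⟩, ⟨hyx, hy⟩⟩
  refine step.trans (liminf_le_liminf (Eventually.of_forall fun k => ?_))
  refine ENNReal.tsum_le_tsum fun x => ?_
  rcases eq_empty_or_nonempty (T k x) with he | hne
  · simp [he]
  · obtain ⟨y, hy1, hy2, hy3⟩ := hne
    have hyr : φ y = r := hy3
    have hρx := hρ k x x.2
    have hdist : dist (φ y) (φ (x:Eucl n)) ≤ L * dist y (x:Eucl n) :=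
      hφ.dist_le_mul y (hSA hy2) x (hSA (tS k x.2))
    have hmem : r ∈ Icc (φ (x:Eucl n) - L * ρ k x) (φ (x:Eucl n) + L * ρ k x) := by
      rw [← hyr]
      have h1 := (mem_closedBall.1 hy1)
      have h2 : dist (φ y) (φ (x:Eucl n)) ≤ L * ρ k x :=
        hdist.trans (mul_le_mul_of_nonneg_left h1 (NNReal.coe_nonneg L))
      rw [Real.dist_eq, abs_le] at h2
      constructor <;> linarith
    rw [indicator_of_mem hmem]
    refine iSup_le fun _ => ?_
    refine ENNReal.rpow_le_rpow ?_ hd0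
    refine le_trans (EMetric.diam_mono (inter_subset_left)) ?_
    rw [← Metric.emetric_closedBall hρx.1.le]
    refine le_trans EMetric.diam_closedBall ?_
    rw [ENNReal.ofReal_mul (by norm_num : (0:ℝ) ≤ 2), ENNReal.ofReal_ofNat]

theorem aux_eilenberg_lintegral {n : ℕ} (hn : 0 < n) {L : ℝ≥0}
    {φ : Eucl n → ℝ} (t : ℕ → Set (Eucl n)) (ρ : ℕ → Eucl n → ℝ)
    (tcount : ∀ k, (t k).Countable)
    (hρ : ∀ k, ∀ x ∈ t k, ρ k x ∈ Ioo (0:ℝ) ((k+1:ℕ):ℝ)⁻¹)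
    (hsum : ∀ k, (∑' x : t k, volume (closedBall (x : Eucl n) (ρ k x))) ≤ ((k+1:ℕ):ℝ≥0∞)⁻¹)
    (k : ℕ) :
    ∫⁻ r, (∑' x : t k, (Icc (φ x - L * ρ k x) (φ x + L * ρ k x)).indicator
        (fun _ => ENNReal.ofReal (2 * ρ k x) ^ ((n:ℝ)-1)) r)
      ≤ (ENNReal.ofReal ((2:ℝ)^n * L) / volume (ball (0:Eucl n) 1)) * ((k+1:ℕ):ℝ≥0∞)⁻¹ := by
  haveI : Countable (t k) := (tcount k).to_subtype
  rw [lintegral_tsum (fun x => (measurable_const.indicator measurableSet_Icc).aemeasurable)]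
  have term : ∀ x : t k, ∫⁻ r, (Icc (φ x - L * ρ k x) (φ x + L * ρ k x)).indicator
      (fun _ => ENNReal.ofReal (2 * ρ k x) ^ ((n:ℝ)-1)) r
      = (ENNReal.ofReal ((2:ℝ)^n * L) / volume (ball (0:Eucl n) 1))
          * volume (closedBall (x : Eucl n) (ρ k x)) := by
    intro x
    have hρx := hρ k x x.2
    rw [lintegral_indicator measurableSet_Icc, setLIntegral_const, Real.volume_Icc]
    have harg : (φ x + L * ρ k x) - (φ x - L * ρ k x) = 2 * ((L:ℝ) * ρ k x) := by ring
    rw [harg]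
    have e1 : ((n:ℝ)-1) = ((n-1:ℕ):ℝ) := by rw [Nat.cast_sub hn]; simp
    rw [e1, ENNReal.rpow_natCast, ← ENNReal.ofReal_pow (by linarith [hρx.1]),
      ← ENNReal.ofReal_mul (by have h1 := hρx.1; positivity)]
    have e2 : (2*ρ k x)^(n-1) * (2*((L:ℝ)*ρ k x)) = (2:ℝ)^n * L * (ρ k x)^n := by
      have hn' : n - 1 + 1 = n := Nat.succ_pred_eq_of_pos hn
      calc (2*ρ k x)^(n-1) * (2*((L:ℝ)*ρ k x))
          = (2^(n-1)*2)*(L:ℝ)*((ρ k x)^(n-1)*(ρ k x)) := by rw [mul_pow]; ring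
        _ = 2^n * (L:ℝ) * (ρ k x)^n := by rw [← pow_succ, ← pow_succ, hn']
    rw [e2, ENNReal.ofReal_mul (by positivity)]
    haveI : Nontrivial (Eucl n) :=
      Module.nontrivial_of_finrank_pos (R := ℝ) (by simp [finrank_euclideanSpace_fin, hn])
    have e3 : ENNReal.ofReal ((ρ k x)^n) = volume (closedBall (x : Eucl n) (ρ k x))
        / volume (ball (0:Eucl n) 1) := by
      rw [Measure.addHaar_closedBall _ _ hρx.1.le, finrank_euclideanSpace_fin,
        mul_div_assoc, ENNReal.div_self (measure_ball_pos volume (0:Eucl n) one_pos).ne'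
          measure_ball_lt_top.ne, mul_one]
    rw [e3, div_eq_mul_inv, div_eq_mul_inv]
    ring
  calc ∑' x : t k, ∫⁻ r, (Icc (φ x - L * ρ k x) (φ x + L * ρ k x)).indicator
        (fun _ => ENNReal.ofReal (2 * ρ k x) ^ ((n:ℝ)-1)) r
      = ∑' x : t k, (ENNReal.ofReal ((2:ℝ)^n * L) / volume (ball (0:Eucl n) 1))
          * volume (closedBall (x : Eucl n) (ρ k x)) := by exact tsum_congr term
    _ = (ENNReal.ofReal ((2:ℝ)^n * L) / volume (ball (0:Eucl n) 1))
          * ∑' x : t k, volume (closedBall (x : Eucl n) (ρ k x)) := ENNReal.tsum_mul_left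
    _ ≤ _ := by gcongr; exact hsum k

theorem aux_eilenberg {n : ℕ} (hn : 0 < n) {A S : Set (Eucl n)} (hSA : S ⊆ A)
    {φ : Eucl n → ℝ} {L : ℝ≥0} (hφ : LipschitzOnWith L φ A) (hS0 : volume S = 0) :
    ∀ᵐ r : ℝ, μH[(n : ℝ) - 1] (S ∩ φ ⁻¹' {r}) = 0 := by
  choose t ρ tcount tS hρ hcov hsum using aux_eilenberg_cov hSA hφ hS0
  haveI : ∀ k, Countable (t k) := fun k => (tcount k).to_subtype
  set G : ℕ → ℝ → ℝ≥0∞ := fun k r => ∑' x : t k,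
      (Icc (φ x - L * ρ k x) (φ x + L * ρ k x)).indicator
        (fun _ => ENNReal.ofReal (2 * ρ k x) ^ ((n:ℝ)-1)) r with hG
  have hGmeas : ∀ k, Measurable (G k) := fun k =>
    Measurable.ennreal_tsum fun x => (measurable_const.indicator measurableSet_Icc)
  set c : ℝ≥0∞ := ENNReal.ofReal ((2:ℝ)^n * L) / volume (ball (0:Eucl n) 1) with hc
  have hcne : c ≠ ∞ := by
    refine (ENNReal.div_lt_top ENNReal.ofReal_ne_top
      (measure_ball_pos volume (0:Eucl n) one_pos).ne').ne
  have hH : ∀ r, μH[(n:ℝ)-1] (S ∩ φ ⁻¹' {r}) ≤ liminf (fun k => G k r) atTop :=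
    aux_eilenberg_claim1 hn hSA hφ t ρ tcount tS hρ hcov
  have hHmeas : Measurable (fun r => liminf (fun k => G k r) atTop) :=
    Measurable.liminf hGmeas
  have h0 : ∫⁻ r, liminf (fun k => G k r) atTop = 0 := by
    have h1 : ∫⁻ r, liminf (fun k => G k r) atTop ≤ liminf (fun k => ∫⁻ r, G k r) atTop :=
      lintegral_liminf_le hGmeas
    have h2 : liminf (fun k => ∫⁻ r, G k r) atTop ≤
        liminf (fun k => c * ((k+1:ℕ):ℝ≥0∞)⁻¹) atTop := by
      refine liminf_le_liminf (Eventually.of_forall fun k =>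
        aux_eilenberg_lintegral hn t ρ tcount hρ hsum k)
    have h3 : Tendsto (fun k : ℕ => c * ((k+1:ℕ):ℝ≥0∞)⁻¹) atTop (𝓝 0) := by
      have : Tendsto (fun k : ℕ => ((k+1:ℕ):ℝ≥0∞)⁻¹) atTop (𝓝 0) :=
        ENNReal.tendsto_inv_nat_nhds_zero.comp (tendsto_add_atTop_nat 1)
      simpa using ENNReal.Tendsto.const_mul this (Or.inr hcne)
    have h4 := h3.liminf_eq
    exact le_antisymm (by rw [← h4]; exact h1.trans h2) (zero_le)
  have h5 : ∀ᵐ r : ℝ, liminf (fun k => G k r) atTop = 0 :=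
    (lintegral_eq_zero_iff hHmeas).1 h0
  filter_upwards [h5] with r hr
  exact le_antisymm (by rw [← hr]; exact hH r) (zero_le)

theorem aux_exists_density {n : ℕ} (hn : 0 < n) {A : Set (Eucl n)} (hA : IsOpen A)
    {φ : Eucl n → ℝ} {x : Eucl n} (hxA : x ∈ A) {ℓ : Eucl n →L[ℝ] ℝ}
    (hdf : HasFDerivAt φ ℓ x) (hℓ : ℓ ≠ 0) :
    ∃ κ : ℝ, 0 < κ ∧ ∀ᶠ ρ in 𝓝[>] (0:ℝ),
      ENNReal.ofReal κ * volume (ball x ρ) ≤ volume (ball x ρ ∩ (A ∩ {y | φ y < φ x})) := by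
  haveI : Nontrivial (Eucl n) :=
    Module.nontrivial_of_finrank_pos (R := ℝ) (by simp [finrank_euclideanSpace_fin, hn])
  obtain ⟨v, hv⟩ : ∃ v, ℓ v ≠ 0 := by
    by_contra h
    push_neg at h
    exact hℓ (ContinuousLinearMap.ext fun w => by simp [h w])
  set u : Eucl n := (ℓ v)⁻¹ • v with hu
  have hℓu : ℓ u = 1 := by simp [hu, inv_mul_cancel₀ hv]
  have hune : u ≠ 0 := fun h => by simp [h] at hℓu
  set c : ℝ := ‖u‖⁻¹ with hc
  have hcpos : 0 < c := by rw [hc]; exact inv_pos.2 (norm_pos_iff.2 hune)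
  set u₀ : Eucl n := ‖u‖⁻¹ • u with hu₀
  have hu₀norm : ‖u₀‖ = 1 := by
    rw [hu₀, norm_smul, norm_inv, norm_norm, inv_mul_cancel₀ (norm_ne_zero_iff.2 hune)]
  have hℓu₀ : ℓ u₀ = c := by rw [hu₀, _root_.map_smul, hℓu, smul_eq_mul, mul_one, hc]
  set s : ℝ := min 4⁻¹ (c / (4 * (‖ℓ‖ + 1))) with hs
  have hspos : 0 < s := by
    refine lt_min (by norm_num) (by positivity)
  have hs4 : s ≤ 4⁻¹ := min_le_left _ _
  have hsl : ‖ℓ‖ * s ≤ c / 4 := by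
    have h1 : s ≤ c / (4 * (‖ℓ‖ + 1)) := min_le_right _ _
    have h2 : ‖ℓ‖ * s ≤ ‖ℓ‖ * (c / (4 * (‖ℓ‖ + 1))) :=
      mul_le_mul_of_nonneg_left h1 (norm_nonneg _)
    refine h2.trans ?_
    rw [← mul_div_assoc, div_le_div_iff₀ (by positivity) (by norm_num : (0:ℝ) < 4)]
    have hl0 : 0 ≤ ‖ℓ‖ := norm_nonneg _
    nlinarith
  have hev : ∀ᶠ y in 𝓝 x, ‖φ y - φ x - ℓ (y - x)‖ ≤ (c/8) * ‖y - x‖ :=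
    (hasFDerivAt_iff_isLittleO.1 hdf).def (by positivity)
  obtain ⟨ε₀, hε₀pos, hε₀⟩ : ∃ ε₀ > 0, ∀ y, dist y x < ε₀ →
      (y ∈ A ∧ ‖φ y - φ x - ℓ (y - x)‖ ≤ (c/8) * ‖y - x‖) := by
    have h1 : ∀ᶠ y in 𝓝 x, y ∈ A ∧ ‖φ y - φ x - ℓ (y - x)‖ ≤ (c/8) * ‖y - x‖ :=
      (hA.eventually_mem hxA).and hev
    simpa [Metric.eventually_nhds_iff] using h1
  refine ⟨s ^ n, by positivity, ?_⟩
  filter_upwards [Ioo_mem_nhdsGT hε₀pos] with ρ hρ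
  obtain ⟨hρ0, hρε⟩ := hρ
  have key : ball (x - (ρ/2) • u₀) (s*ρ) ⊆ ball x ρ ∩ (A ∩ {y | φ y < φ x}) := by
    intro y hy
    rw [mem_ball] at hy
    have hz : ‖y - (x - (ρ/2) • u₀)‖ < s * ρ := by rwa [← dist_eq_norm]
    set z : Eucl n := y - (x - (ρ/2) • u₀) with hzdef
    have hyx : y - x = z - (ρ/2) • u₀ := by rw [hzdef]; abel
    have hnyx : ‖y - x‖ < ρ := by
      rw [hyx]
      calc ‖z - (ρ/2) • u₀‖ ≤ ‖z‖ + ‖(ρ/2) • u₀‖ := norm_sub_le _ _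
        _ < s * ρ + ρ/2 := by
            rw [norm_smul, hu₀norm, mul_one, Real.norm_eq_abs, abs_of_pos (by linarith)]
            linarith
        _ ≤ ρ := by
            have : s * ρ ≤ 4⁻¹ * ρ := mul_le_mul_of_nonneg_right hs4 hρ0.le
            linarith
    have hymem : y ∈ ball x ρ := by rwa [mem_ball, dist_eq_norm]
    have hyA : y ∈ A := (hε₀ y (by rw [dist_eq_norm]; linarith)).1
    have hyest := (hε₀ y (by rw [dist_eq_norm]; linarith)).2
    have hℓyx : ℓ (y - x) ≤ -(c * ρ / 4) := by
      rw [hyx, map_sub, _root_.map_smul, hℓu₀, smul_eq_mul]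
      have h1 : ℓ z ≤ ‖ℓ‖ * ‖z‖ := (le_abs_self _).trans (by
        rw [← Real.norm_eq_abs]; exact ℓ.le_opNorm z)
      have h2 : ‖ℓ‖ * ‖z‖ ≤ ‖ℓ‖ * (s * ρ) :=
        mul_le_mul_of_nonneg_left hz.le (norm_nonneg _)
      have h3 : ‖ℓ‖ * (s * ρ) ≤ (c/4) * ρ := by
        rw [← mul_assoc]
        exact mul_le_mul_of_nonneg_right hsl hρ0.le
      nlinarith
    have hφy : φ y < φ x := by
      have habs : |φ y - φ x - ℓ (y - x)| ≤ (c/8) * ‖y - x‖ := by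
        rwa [Real.norm_eq_abs] at hyest
      rw [abs_le] at habs
      have h8 : (c/8) * ‖y - x‖ ≤ (c/8) * ρ :=
        mul_le_mul_of_nonneg_left hnyx.le (by positivity)
      nlinarith
    exact ⟨hymem, hyA, hφy⟩
  calc ENNReal.ofReal (s^n) * volume (ball x ρ)
      = volume (ball (x - (ρ/2) • u₀) (s*ρ)) := by
        rw [Measure.addHaar_ball _ _ hρ0.le,
          Measure.addHaar_ball _ _ (by positivity : (0:ℝ) ≤ s*ρ),
          finrank_euclideanSpace_fin, ← mul_assoc, ← ENNReal.ofReal_mul (by positivity),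
          ← mul_pow]
    _ ≤ volume (ball x ρ ∩ (A ∩ {y | φ y < φ x})) := measure_mono key

theorem aux_trace_eq_at_point {n : ℕ} (hn : 0 < n) {A : Set (Eucl n)} (hA : IsOpen A)
    {f : Eucl n → ℝ} (hfi : IntegrableOn f A volume) {x : Eucl n} (hxA : x ∈ A)
    (hleb : Tendsto (fun ρ : ℝ =>
        ⨍ y in closedBall x ρ, ‖A.indicator f y - A.indicator f x‖) (𝓝[>] 0) (𝓝 0))
    {D : Set (Eucl n)} {κ : ℝ} (hκ : 0 < κ)
    (hdens : ∀ᶠ ρ in 𝓝[>] (0:ℝ), ENNReal.ofReal κ * volume (ball x ρ) ≤ volume (ball x ρ ∩ D))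
    {T : ℝ}
    (hT : Tendsto (fun ρ : ℝ =>
        (volume (ball x ρ ∩ D)).toReal⁻¹ * ∫ y in ball x ρ ∩ D, |T - f y|) (𝓝[>] 0) (𝓝 0))
    (hDA : D ⊆ A) :
    f x = T := by
  haveI : Nontrivial (Eucl n) :=
    Module.nontrivial_of_finrank_pos (R := ℝ) (by simp [finrank_euclideanSpace_fin, hn])
  have key : ∀ ε > (0:ℝ), |T - f x| ≤ 2 * ε := by
    intro ε hε
    obtain ⟨ε₀, hε₀pos, hε₀⟩ := Metric.isOpen_iff.1 hA x hxA
    have e1 : ∀ᶠ ρ in 𝓝[>] (0:ℝ), closedBall x ρ ⊆ A := by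
      filter_upwards [Ioo_mem_nhdsGT (half_pos hε₀pos)] with ρ hρ
      exact (closedBall_subset_ball (by linarith [hρ.2])).trans hε₀
    have e3 := hT.eventually (gt_mem_nhds hε)
    have e4 := hleb.eventually (gt_mem_nhds (mul_pos hκ hε))
    obtain ⟨ρ, ⟨⟨hsubA, hdensρ⟩, hTρ, hlebρ⟩, hρ0⟩ :=
      (((e1.and hdens).and (e3.and e4)).and self_mem_nhdsWithin).exists
    have hρpos : (0:ℝ) < ρ := hρ0
    set s : Set (Eucl n) := ball x ρ ∩ D with hsdef
    set B : Set (Eucl n) := closedBall x ρ with hBdef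
    have hsB : s ⊆ B := inter_subset_left.trans ball_subset_closedBall
    have hsA : s ⊆ A := hsB.trans hsubA
    have hVBne : volume B ≠ ∞ := measure_closedBall_lt_top.ne
    have hVBball : volume B = volume (ball x ρ) := Measure.addHaar_closedBall_eq_addHaar_ball _ _ _
    have hVbpos : volume (ball x ρ) ≠ 0 := (measure_ball_pos _ _ hρpos).ne'
    have hVs0 : volume s ≠ 0 := by
      have hpos : 0 < ENNReal.ofReal κ * volume (ball x ρ) :=
        ENNReal.mul_pos (ENNReal.ofReal_pos.2 hκ).ne' hVbpos
      exact (hpos.trans_le hdensρ).ne'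
    have hVsne : volume s ≠ ∞ := ((measure_mono hsB).trans_lt hVBne.lt_top).ne
    have hVsT : 0 < (volume s).toReal := ENNReal.toReal_pos hVs0 hVsne
    have hVbT : 0 < (volume (ball x ρ)).toReal :=
      ENNReal.toReal_pos hVbpos measure_ball_lt_top.ne
    have hVBT : 0 < (volume B).toReal := by rw [hVBball]; exact hVbT
    have hfs : IntegrableOn f s volume := hfi.mono_set hsA
    have hTf : IntegrableOn (fun y => |T - f y|) s volume :=
      ((integrableOn_const hVsne).sub hfs).abs
    have hfB : IntegrableOn (fun y => |f y - f x|) B volume :=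
      ((hfi.mono_set hsubA).sub (integrableOn_const hVBne)).abs
    have step1 : |T - f x| = (volume s).toReal⁻¹ * ∫ _ in s, |T - f x| := by
      rw [setIntegral_const, smul_eq_mul, measureReal_def, ← mul_assoc, inv_mul_cancel₀ hVsT.ne', one_mul]
    have tri : ∫ y in s, |T - f x| ≤ (∫ y in s, |T - f y|) + ∫ y in s, |f y - f x| := by
      rw [← integral_add hTf (hfB.mono_set hsB)]
      refine integral_mono (integrableOn_const hVsne)
        (hTf.add (hfB.mono_set hsB)) ?_
      intro y
      calc |T - f x| = |(T - f y) + (f y - f x)| := by ring_nf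
        _ ≤ |T - f y| + |f y - f x| := abs_add_le _ _
    have mono2 : ∫ y in s, |f y - f x| ≤ ∫ y in B, |f y - f x| :=
      setIntegral_mono_set hfB (Eventually.of_forall fun y => abs_nonneg _) hsB.eventuallyLE
    have havg : ∫ y in B, |f y - f x|
        = (volume B).toReal * ⨍ y in B, ‖A.indicator f y - A.indicator f x‖ := by
      have hcong : ∀ y ∈ B, |f y - f x| = ‖A.indicator f y - A.indicator f x‖ := fun y hy => by
        rw [indicator_of_mem (hsubA hy), indicator_of_mem hxA, Real.norm_eq_abs]
      rw [setIntegral_congr_fun measurableSet_closedBall hcong, setAverage_eq, smul_eq_mul, measureReal_def,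
        ← mul_assoc, mul_inv_cancel₀ hVBT.ne', one_mul]
    have hge : κ * (volume (ball x ρ)).toReal ≤ (volume s).toReal := by
      have := ENNReal.toReal_mono hVsne hdensρ
      rwa [ENNReal.toReal_mul, ENNReal.toReal_ofReal hκ.le] at this
    have hinvVB : (volume s).toReal⁻¹ * (volume B).toReal ≤ κ⁻¹ := by
      rw [hVBball]
      have h1 : (volume s).toReal⁻¹ ≤ (κ * (volume (ball x ρ)).toReal)⁻¹ :=
        inv_anti₀ (by positivity) hge
      calc (volume s).toReal⁻¹ * (volume (ball x ρ)).toReal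
          ≤ (κ * (volume (ball x ρ)).toReal)⁻¹ * (volume (ball x ρ)).toReal :=
            mul_le_mul_of_nonneg_right h1 hVbT.le
        _ = κ⁻¹ := by rw [mul_inv, mul_assoc, inv_mul_cancel₀ hVbT.ne', mul_one]
    have h1 : (volume s).toReal⁻¹ * ∫ y in s, |T - f y| ≤ ε := hTρ.le
    have h2 : (volume s).toReal⁻¹ * ∫ y in s, |f y - f x| ≤ ε := by
      have hIB : ∫ y in s, |f y - f x| ≤ (volume B).toReal * (κ * ε) := by
        refine mono2.trans ?_
        rw [havg]
        exact mul_le_mul_of_nonneg_left hlebρ.le ENNReal.toReal_nonneg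
      calc (volume s).toReal⁻¹ * ∫ y in s, |f y - f x|
          ≤ (volume s).toReal⁻¹ * ((volume B).toReal * (κ * ε)) :=
            mul_le_mul_of_nonneg_left hIB (by positivity)
        _ = ((volume s).toReal⁻¹ * (volume B).toReal) * (κ * ε) := by ring
        _ ≤ κ⁻¹ * (κ * ε) := mul_le_mul_of_nonneg_right hinvVB (by positivity)
        _ = ε := by field_simp
    calc |T - f x| = (volume s).toReal⁻¹ * ∫ _ in s, |T - f x| := step1
      _ ≤ (volume s).toReal⁻¹ * ((∫ y in s, |T - f y|) + ∫ y in s, |f y - f x|) :=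
          mul_le_mul_of_nonneg_left tri (by positivity)
      _ = ((volume s).toReal⁻¹ * ∫ y in s, |T - f y|)
            + (volume s).toReal⁻¹ * ∫ y in s, |f y - f x| := by ring
      _ ≤ ε + ε := add_le_add h1 h2
      _ = 2 * ε := by ring
  have habs : T - f x = 0 := by
    refine abs_nonpos_iff.1 ?_
    by_contra h
    push_neg at h
    have := key (|T - f x| / 4) (by linarith)
    linarith
  linarith

theorem aux_lebesgue_ae {n : ℕ} {A : Set (Eucl n)} (hA : IsOpen A) {f : Eucl n → ℝ}
    (hfi : IntegrableOn f A volume) :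
    ∀ᵐ x, Tendsto (fun ρ : ℝ =>
      ⨍ y in closedBall x ρ, ‖A.indicator f y - A.indicator f x‖) (𝓝[>] (0:ℝ)) (𝓝 0) := by
  have hfA : Integrable (A.indicator f) volume :=
    (integrable_indicator_iff hA.measurableSet).2 hfi
  filter_upwards [IsUnifLocDoublingMeasure.ae_tendsto_average_norm_sub volume
    hfA.locallyIntegrable 1] with x hx
  exact hx (fun _ => x) id tendsto_id
    (eventually_mem_nhdsWithin.mono fun ρ (hρ : ρ ∈ Ioi 0) =>
      mem_closedBall_self (by simpa using hρ.le))

end AuxTraceLemmas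

set_option maxHeartbeats 1000000

/-- Let `A ⊆ ℝⁿ` be open, `φ : A → ℝ` Lipschitz and `C¹` with nonvanishing
gradient on `A`, and `A_r = φ⁻¹((−∞,r))`. For every `f ∈ BV(A)`, for a.e. `r ∈ ℝ` and
`ℋ^{n−1}`-a.e. `x ∈ ∂A_r ∩ A`, `f(x)` coincides with the inner and outer traces of `f`
on `∂A_r`. -/
theorem ae_eq_trace_on_level_sets {n : ℕ}
    (A : Set (Eucl n)) (hA : IsOpen A)
    (φ : Eucl n → ℝ) (L : ℝ≥0) (hφLip : LipschitzOnWith L φ A)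
    (hφC1 : ContDiffOn ℝ 1 φ A) (hφgrad : ∀ x ∈ A, fderiv ℝ φ x ≠ 0)
    (f : Eucl n → ℝ) (hf : MemBV f A) :
    ∀ᵐ r : ℝ,
      ∀ Tp Tm : Eucl n → ℝ,
        IsTraceOn ((n : ℝ) - 1) (A ∩ φ ⁻¹' Iio r) f Tp
            (frontier (A ∩ φ ⁻¹' Iio r) ∩ A) →
        IsTraceOn ((n : ℝ) - 1) (A \ closure (A ∩ φ ⁻¹' Iio r)) f Tm
            (frontier (A ∩ φ ⁻¹' Iio r) ∩ A) →
        ∀ᵐ x ∂((μH[(n : ℝ) - 1] : Measure (Eucl n)).restrict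
            (frontier (A ∩ φ ⁻¹' Iio r) ∩ A)),
          f x = Tp x ∧ f x = Tm x := by
  rcases Nat.eq_zero_or_pos n with hn | hn
  · subst hn
    haveI : Subsingleton (Eucl 0) := ⟨fun a b => by ext i; exact i.elim0⟩
    refine Eventually.of_forall fun r Tp Tm _ _ => ?_
    have hfr : frontier (A ∩ φ ⁻¹' Iio r) = ∅ := by
      rcases (A ∩ φ ⁻¹' Iio r).eq_empty_or_nonempty with h | ⟨z, hz⟩
      · simp [h]
      · have h2 : (A ∩ φ ⁻¹' Iio r) = univ :=
          eq_univ_of_forall fun w => (Subsingleton.elim z w) ▸ hz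
        simp [h2]
    rw [hfr]
    simp
  · have hleb := aux_lebesgue_ae hA hf.1
    set S : Set (Eucl n) := {x | x ∈ A ∧ ¬ Tendsto (fun ρ : ℝ =>
      ⨍ y in closedBall x ρ, ‖A.indicator f y - A.indicator f x‖) (𝓝[>] (0:ℝ)) (𝓝 0)} with hS
    have hSA : S ⊆ A := fun x hx => hx.1
    have hS0 : volume S = 0 :=
      measure_mono_null (fun x hx => hx.2) (ae_iff.1 hleb)
    filter_upwards [aux_eilenberg hn hSA hφLip hS0] with r hr Tp Tm hTp hTm
    have hcont := hφC1.continuousOn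
    have hΓmeas : MeasurableSet (frontier (A ∩ φ ⁻¹' Iio r) ∩ A) :=
      isClosed_frontier.measurableSet.inter hA.measurableSet
    have hlevel : ∀ y ∈ frontier (A ∩ φ ⁻¹' Iio r) ∩ A, φ y = r := by
      rintro y ⟨hyf, hyA⟩
      by_contra hne
      rcases lt_or_gt_of_ne hne with hlt | hgt
      · have ho : IsOpen (A ∩ φ ⁻¹' Iio r) := hcont.isOpen_inter_preimage hA isOpen_Iio
        rw [ho.frontier_eq] at hyf
        exact hyf.2 ⟨hyA, hlt⟩
      · have hU : IsOpen (A ∩ φ ⁻¹' Ioi r) := hcont.isOpen_inter_preimage hA isOpen_Ioi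
        obtain ⟨z, hzU, hzs⟩ := mem_closure_iff.1 (frontier_subset_closure hyf) _ hU ⟨hyA, hgt⟩
        have h1 : r < φ z := hzU.2
        have h2 : φ z < r := hzs.2
        exact absurd h2 (not_lt.2 h1.le)
    have hae_nS : ∀ᵐ x ∂((μH[(n:ℝ)-1] : Measure (Eucl n)).restrict
        (frontier (A ∩ φ ⁻¹' Iio r) ∩ A)), x ∉ S := by
      rw [ae_iff]
      have he : {x | ¬ x ∉ S} = S := by ext z; simp
      rw [he, Measure.restrict_apply' hΓmeas]
      refine measure_mono_null (fun y hy => ?_) hr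
      exact ⟨hy.1, by simpa using hlevel y hy.2⟩
    filter_upwards [hTp, hTm, hae_nS, ae_restrict_mem hΓmeas] with x hxTp hxTm hxS hxΓ
    have hxA : x ∈ A := hxΓ.2
    have hxr : φ x = r := hlevel x hxΓ
    have hxleb : Tendsto (fun ρ : ℝ =>
        ⨍ y in closedBall x ρ, ‖A.indicator f y - A.indicator f x‖) (𝓝[>] (0:ℝ)) (𝓝 0) := by
      by_contra h
      exact hxS ⟨hxA, h⟩
    have hder : HasFDerivAt φ (fderiv ℝ φ x) x :=
      ((hφC1.differentiableOn one_ne_zero).differentiableAt (hA.mem_nhds hxA)).hasFDerivAt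
    have hℓ := hφgrad x hxA
    constructor
    · obtain ⟨κ, hκ, hdens⟩ := aux_exists_density hn hA hxA hder hℓ
      have hset : A ∩ {y | φ y < φ x} = A ∩ φ ⁻¹' Iio r := by
        ext z
        simp [mem_preimage, mem_Iio, hxr]
      rw [hset] at hdens
      exact aux_trace_eq_at_point hn hA hf.1 hxA hxleb hκ hdens hxTp inter_subset_left
    · have hderneg : HasFDerivAt (fun y => -φ y) (-(fderiv ℝ φ x)) x := hder.neg
      obtain ⟨κ, hκ, hdens⟩ := aux_exists_density hn hA hxA hderneg (neg_ne_zero.2 hℓ)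
      have hsub : A ∩ {y | -φ y < -φ x} ⊆ A \ closure (A ∩ φ ⁻¹' Iio r) := by
        rintro y ⟨hyA, hy⟩
        have hgt : r < φ y := by
          rw [← hxr]
          simpa using hy
        refine ⟨hyA, fun hc => ?_⟩
        have hU : IsOpen (A ∩ φ ⁻¹' Ioi r) := hcont.isOpen_inter_preimage hA isOpen_Ioi
        obtain ⟨z, hzU, hzs⟩ := mem_closure_iff.1 hc _ hU ⟨hyA, hgt⟩
        have h1 : r < φ z := hzU.2
        have h2 : φ z < r := hzs.2
        exact absurd h2 (not_lt.2 h1.le)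
      have hdens' : ∀ᶠ ρ in 𝓝[>] (0:ℝ), ENNReal.ofReal κ * volume (ball x ρ)
          ≤ volume (ball x ρ ∩ (A \ closure (A ∩ φ ⁻¹' Iio r))) := by
        filter_upwards [hdens] with ρ h
        exact h.trans (measure_mono (inter_subset_inter_right _ hsub))
      exact aux_trace_eq_at_point hn hA hf.1 hxA hxleb hκ hdens' hxTm diff_subset
end
end

section
/- Let Ω ⊂ ℝⁿ be an open set with Lipschitz boundary, 0 ∈ ∂Ω, locally the epigraph of a Lipschitz function ω : B'_ρ → ℝ with ω(0)=0. Assume ⟨x', ∇ω(x')⟩ ≤ ω(x') + u(|x'|) for a.e. x' ∈ B'_ρ, where u : (0,T) → ℝ is a non-decreasing function satisfying (V1) and (V2). Then Ω satisfies the visibility property at 0. -/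
open MeasureTheory Metric Set Filter
open scoped Topology ENNReal NNReal RealInnerProductSpace

noncomputable section

/-- The point `(x', t) ∈ ℝ^{n+1}` obtained by appending the coordinate `t` to `x' ∈ ℝⁿ`. -/
def snocE {n : ℕ} (x' : Eucl n) (t : ℝ) : Eucl (n+1) :=
  (EuclideanSpace.equiv (Fin (n+1)) ℝ).symm (Fin.snoc (EuclideanSpace.equiv (Fin n) ℝ x') t)

/-- The first `n` coordinates `x'` of a point `x ∈ ℝ^{n+1}`. -/
def initE {n : ℕ} (x : Eucl (n+1)) : Eucl n :=
  (EuclideanSpace.equiv (Fin n) ℝ).symm (Fin.init (EuclideanSpace.equiv (Fin (n+1)) ℝ x))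

/-- The last coordinate of a point `x ∈ ℝ^{n+1}`. -/
def lastE {n : ℕ} (x : Eucl (n+1)) : ℝ := x (Fin.last n)

/-- Conditions (V1)–(V2) for a visibility function: `u ∈ C¹([0,T))` (with derivative
`u'`), `u(0) = u'(0) = 0`, `0 ≤ u' ≤ 1/2`, and
`γ_u(t) = t⁻¹ sup_{0<s≤t} √(u(s)/s + u'(s))` is summable on `(0,T)`. -/
def VisibilityV12 (u u' : ℝ → ℝ) (T : ℝ) : Prop :=
  0 < T ∧ u 0 = 0 ∧ u' 0 = 0 ∧
  ContinuousOn u (Ico 0 T) ∧ ContinuousOn u' (Ico 0 T) ∧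
  (∀ t ∈ Ioo (0:ℝ) T, HasDerivAt u (u' t) t) ∧
  (∀ t ∈ Ico (0:ℝ) T, 0 ≤ u' t ∧ u' t ≤ 1/2) ∧
  MeasureTheory.IntegrableOn
    (fun t => t⁻¹ * sSup ((fun s => Real.sqrt (u s / s + u' s)) '' Ioc (0:ℝ) t))
    (Ioo (0:ℝ) T) volume

/-- The point `U_t = −u(t)·e_{n+1}` (resp. `V_r = −v(r)·e_{n+1}`). -/
def vertexPt {n : ℕ} (u : ℝ → ℝ) (t : ℝ) : Eucl (n+1) := snocE (0 : Eucl n) (-(u t))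

/-- Condition (V3): for all `0 < t < T`, the segment joining `U_t = −u(t)eₙ` with any
point of `∂Ω ∩ B_t` does not intersect `Ω`. -/
def VisibilityV3 {n : ℕ} (Ω : Set (Eucl (n+1))) (u : ℝ → ℝ) (T : ℝ) : Prop :=
  ∀ t ∈ Ioo (0:ℝ) T, ∀ x ∈ frontier Ω ∩ ball (0 : Eucl (n+1)) t,
    Disjoint (segment ℝ (vertexPt u t) x) Ω

/-- Off-centric condition (V3'): for all `0 < r < R`, any segment joining
`V_r = −v(r)eₙ` with a point of `∂Ω ∩ B_r(V_r)` does not intersect `Ω`. -/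
def VisibilityV3' {n : ℕ} (Ω : Set (Eucl (n+1))) (v : ℝ → ℝ) (R : ℝ) : Prop :=
  ∀ r ∈ Ioo (0:ℝ) R, ∀ x ∈ frontier Ω ∩ ball (vertexPt v r : Eucl (n+1)) r,
    Disjoint (segment ℝ (vertexPt v r) x) Ω

/-- The visibility property at `0` (centered form). -/
def Visibility {n : ℕ} (Ω : Set (Eucl (n+1))) (u u' : ℝ → ℝ) (T : ℝ) : Prop :=
  VisibilityV12 u u' T ∧ VisibilityV3 Ω u T

/-- The visibility property at `0` (off-centric form). -/
def Visibility' {n : ℕ} (Ω : Set (Eucl (n+1))) (v v' : ℝ → ℝ) (R : ℝ) : Prop :=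
  VisibilityV12 v v' R ∧ VisibilityV3' Ω v R

/-- Local graphical representation of `∂Ω` near `0 ∈ ∂Ω` in the cylinder
`B'_ρ × (−3m, 3m)` as the epigraph of `ω`. -/
def GraphRep {n : ℕ} (Ω : Set (Eucl (n+1))) (ω : Eucl n → ℝ) (ρ m : ℝ) : Prop :=
  Ω ∩ {x : Eucl (n+1) | ‖initE x‖ < ρ ∧ |lastE x| < 3*m} =
    {x : Eucl (n+1) | ‖initE x‖ < ρ ∧ ω (initE x) < lastE x ∧ lastE x < 3*m}

/-- If `g` is continuous on `[a,b]`, satisfies a one-sided Lipschitz bound, and has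
derivative `≤ c` at almost every point of `(a,b)`, then `g b - g a ≤ c * (b - a)`. -/
lemma aux_deriv_le_const {g : ℝ → ℝ} {K c a b : ℝ} (hab : a ≤ b)
    (hcont : ContinuousOn g (Icc a b))
    (hK : ∀ t ∈ Icc a b, ∀ u ∈ Icc a b, t ≤ u → g u - g t ≤ K * (u - t))
    {E : Set ℝ} (hE : ∀ x ∈ E, ∃ g', HasDerivAt g g' x ∧ g' ≤ c)
    (hE0 : volume (Ioo a b \ E) = 0) :
    g b - g a ≤ c * (b - a) := by
  set coef : ℝ := |K| + |c| + 1 with hcoef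
  have coef_pos : (0:ℝ) < coef := by positivity
  refine le_of_forall_pos_le_add fun ε εpos => ?_
  set ε₁ : ℝ := ε / 2 / (b - a + 1) with hε₁
  have ε₁pos : 0 < ε₁ := by
    apply div_pos (by linarith); linarith
  set δ : ℝ := ε / 2 / coef with hδ
  have δpos : 0 < δ := by positivity
  -- bad set and open neighborhood
  have hBnull : volume (Ico a b \ E) = 0 := by
    have hsub : Ico a b \ E ⊆ {a} ∪ (Ioo a b \ E) := by
      intro x hx
      rcases eq_or_lt_of_le hx.1.1 with h | h
      · exact Or.inl (by simp [h.symm])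
      · exact Or.inr ⟨⟨h, hx.1.2⟩, hx.2⟩
    refine le_antisymm (le_trans (measure_mono hsub) ?_) zero_le
    refine le_trans (measure_union_le _ _) ?_
    simp [hE0]
  obtain ⟨U, hBU, hUopen, hUvol⟩ :
      ∃ U ⊇ Ico a b \ E, IsOpen U ∧ volume U < ENNReal.ofReal δ :=
    Set.exists_isOpen_lt_of_lt _ _ (by simp [hBnull, δpos])
  have hUfin : volume U < ⊤ := hUvol.trans_le le_top
  set F : ℝ → ℝ := fun t => (volume (U ∩ Ioc a t)).toReal with hF
  have hFa : F a = 0 := by simp [hF]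
  have hFnn : ∀ t, 0 ≤ F t := fun t => ENNReal.toReal_nonneg
  have hFadd : ∀ t u : ℝ, a ≤ t → t ≤ u →
      F u = F t + (volume (U ∩ Ioc t u)).toReal := by
    intro t u hat htu
    have hsplit : U ∩ Ioc a u = (U ∩ Ioc a t) ∪ (U ∩ Ioc t u) := by
      rw [← inter_union_distrib_left, Ioc_union_Ioc_eq_Ioc hat htu]
    have hdisj : Disjoint (U ∩ Ioc a t) (U ∩ Ioc t u) :=
      ((Ioc_disjoint_Ioc_of_le le_rfl).mono inter_subset_right inter_subset_right)
    rw [hF]; dsimp only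
    rw [hsplit, measure_union hdisj (hUopen.measurableSet.inter measurableSet_Ioc),
      ENNReal.toReal_add]
    · exact ((measure_mono inter_subset_left).trans_lt hUfin).ne
    · exact ((measure_mono inter_subset_left).trans_lt hUfin).ne
  have hFdiff_le : ∀ t u : ℝ, t ≤ u → (volume (U ∩ Ioc t u)).toReal ≤ u - t := by
    intro t u htu
    have h1 : volume (U ∩ Ioc t u) ≤ ENNReal.ofReal (u - t) := by
      refine (measure_mono inter_subset_right).trans ?_
      simp [Real.volume_Ioc]
    exact ENNReal.toReal_le_of_le_ofReal (by linarith) h1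
  have hFmono : ∀ t u : ℝ, a ≤ t → t ≤ u → F t ≤ F u := by
    intro t u hat htu
    rw [hFadd t u hat htu]
    exact le_add_of_nonneg_right ENNReal.toReal_nonneg
  have hFcont : ContinuousOn F (Icc a b) := by
    have hlip : LipschitzOnWith 1 F (Ici a) := by
      refine LipschitzOnWith.of_dist_le_mul fun t ht u hu => ?_
      rw [NNReal.coe_one, one_mul, Real.dist_eq, Real.dist_eq]
      rcases le_total u t with h | h
      · rw [abs_of_nonneg (by linarith [hFmono u t hu h] : (0:ℝ) ≤ F t - F u),
          hFadd u t hu h, abs_of_nonneg (by linarith : (0:ℝ) ≤ t - u)]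
        have := hFdiff_le u t h
        linarith
      · rw [abs_sub_comm, abs_of_nonneg (by linarith [hFmono t u ht h] : (0:ℝ) ≤ F u - F t),
          hFadd t u ht h, abs_sub_comm, abs_of_nonneg (by linarith : (0:ℝ) ≤ u - t)]
        have := hFdiff_le t u h
        linarith
    exact (hlip.continuousOn).mono (fun x hx => hx.1)
  -- the induction set
  set P : ℝ → Prop := fun t => g t - g a ≤ (c + ε₁) * (t - a) + coef * F t with hP
  have main : Icc a b ⊆ {t | P t} := by
    have s_closed : IsClosed ({t | P t} ∩ Icc a b) := by
      have hc1 : ContinuousOn (fun t => g t - g a - ((c + ε₁) * (t - a) + coef * F t)) (Icc a b) := by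
        apply ContinuousOn.sub
        · exact hcont.sub continuousOn_const
        · exact (continuousOn_const.mul ((continuousOn_id.sub continuousOn_const))).add
            (continuousOn_const.mul hFcont)
      have : {t | P t} ∩ Icc a b = {t ∈ Icc a b | g t - g a - ((c + ε₁) * (t - a) + coef * F t) ≤ 0} := by
        ext t; constructor
        · rintro ⟨h1, h2⟩
          simp only [mem_setOf_eq, hP] at h1
          exact ⟨h2, by linarith⟩
        · rintro ⟨h2, h1⟩
          refine ⟨?_, h2⟩
          simp only [mem_setOf_eq, hP]
          linarith
      rw [this]
      exact hc1.preimage_isClosed_of_isClosed isClosed_Icc isClosed_Iic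
    refine s_closed.Icc_subset_of_forall_exists_gt ?_ ?_
    · simp only [mem_setOf_eq, hP, hFa]
      simp [sub_self]
    · rintro t ⟨htP, hta, htb⟩ v hv
      by_cases htE : t ∈ E
      · -- good point: use the derivative
        obtain ⟨g', hg', hg'c⟩ := hE t htE
        have hslope : ∀ᶠ u in 𝓝[>] t, g u - g t ≤ (c + ε₁) * (u - t) := by
          have h1 : Tendsto (slope g t) (𝓝[>] t) (𝓝 g') :=
            (hasDerivAt_iff_tendsto_slope.1 hg').mono_left
              (nhdsWithin_mono t (fun x hx => ne_of_gt hx))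
          have h2 : ∀ᶠ u in 𝓝[>] t, slope g t u < c + ε₁ :=
            h1.eventually_lt_const (by linarith)
          filter_upwards [h2, self_mem_nhdsWithin] with u hu hu'
          have hut : (0:ℝ) < u - t := sub_pos.2 hu'
          rw [slope_def_field] at hu
          calc g u - g t = (g u - g t) / (u - t) * (u - t) := by field_simp
            _ ≤ (c + ε₁) * (u - t) := by
                apply mul_le_mul_of_nonneg_right (le_of_lt hu) (le_of_lt hut)
        have hmem : Ioo t (min v b) ∈ 𝓝[>] t :=
          Ioo_mem_nhdsGT (lt_min hv htb)
        obtain ⟨w, hw1, hw2⟩ := (hslope.and hmem).exists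
        refine ⟨w, ?_, hw2.1, le_of_lt (hw2.2.trans_le (min_le_left _ _))⟩
        simp only [mem_setOf_eq, hP]
        have hFw : F t ≤ F w := hFmono t w hta (le_of_lt hw2.1)
        have : g w - g a = (g w - g t) + (g t - g a) := by ring
        rw [this]
        have h3 : g t - g a ≤ (c + ε₁) * (t - a) + coef * F t := htP
        nlinarith [hw1, coef_pos]
      · -- bad point: t ∈ U
        have htU : t ∈ U := hBU ⟨⟨hta, htb⟩, htE⟩
        obtain ⟨r, hr, hball⟩ := Metric.isOpen_iff.1 hUopen t htU
        set w := min (min v b) (t + r / 2) with hw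
        have htw : t < w := by
          apply lt_min (lt_min hv htb); linarith
        have hwb : w ≤ b := (min_le_left _ _).trans (min_le_right _ _)
        have hIocU : Ioc t w ⊆ U := by
          intro x hx
          apply hball
          rw [mem_ball, Real.dist_eq, abs_of_nonneg (by linarith [hx.1] : (0:ℝ) ≤ x - t)]
          have : x ≤ t + r / 2 := hx.2.trans (min_le_right _ _)
          linarith
        have hFw : F w = F t + (w - t) := by
          rw [hFadd t w hta (le_of_lt htw)]
          congr 1
          rw [inter_eq_self_of_subset_right hIocU]
          rw [Real.volume_Ioc, ENNReal.toReal_ofReal (by linarith)]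
        refine ⟨w, ?_, htw, min_le_left _ _ |>.trans (min_le_left _ _)⟩
        simp only [mem_setOf_eq, hP]
        have hgw : g w - g t ≤ K * (w - t) :=
          hK t ⟨hta, le_of_lt htb⟩ w ⟨hta.trans (le_of_lt htw), hwb⟩ (le_of_lt htw)
        have h3 : g t - g a ≤ (c + ε₁) * (t - a) + coef * F t := htP
        have hKcoef : K * (w - t) ≤ (c + ε₁) * (w - t) + coef * (w - t) := by
          have h4 : (0:ℝ) ≤ w - t := by linarith
          have h5 : K ≤ c + ε₁ + coef := by
            rw [hcoef]
            have := le_abs_self K; have := le_abs_self c; have := neg_abs_le c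
            linarith
          nlinarith
        rw [hFw]
        have : g w - g a = (g w - g t) + (g t - g a) := by ring
        rw [this]
        nlinarith
  -- conclude
  have hPb : P b := main ⟨hab, le_refl b⟩
  simp only [hP] at hPb
  have hFb : coef * F b ≤ ε / 2 := by
    have h1 : volume (U ∩ Ioc a b) ≤ volume U := measure_mono inter_subset_left
    have h2 : F b ≤ δ := by
      rw [hF]; dsimp only
      refine ENNReal.toReal_le_of_le_ofReal (le_of_lt δpos) (h1.trans (le_of_lt hUvol))
    calc coef * F b ≤ coef * δ := by nlinarith
      _ = ε / 2 := by rw [hδ]; field_simp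
  have hε₁b : ε₁ * (b - a) ≤ ε / 2 := by
    rw [hε₁]
    rw [div_mul_eq_mul_div, div_le_iff₀ (by linarith : (0:ℝ) < b - a + 1)]
    nlinarith
  nlinarith


lemma aux_ae_slice {n : ℕ} {N : Set (Eucl n)} (hN : volume N = 0) :
    ∀ᵐ x ∂(volume : Measure (Eucl n)),
      volume {s : ℝ | s ∈ Ioc (0:ℝ) 1 ∧ s • x ∈ N} = 0 := by
  set M := toMeasurable volume N with hM
  have hMmeas : MeasurableSet M := measurableSet_toMeasurable _ _
  have hMnull : volume M = 0 := by rw [hM, measure_toMeasurable]; exact hN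
  have hNM : N ⊆ M := subset_toMeasurable _ _
  set A : Set (Eucl n × ℝ) := {p | p.2 ∈ Ioc (0:ℝ) 1 ∧ p.2 • p.1 ∈ M} with hA
  have mA : MeasurableSet A := by
    apply MeasurableSet.inter
    · exact measurable_snd measurableSet_Ioc
    · exact (continuous_snd.smul continuous_fst).measurable hMmeas
  have hAnull : (volume.prod volume) A = 0 := by
    rw [Measure.prod_apply_symm mA]
    have hslice : ∀ s : ℝ, volume ((fun x : Eucl n => (x, s)) ⁻¹' A) = 0 := by
      intro s
      by_cases hs : s ∈ Ioc (0:ℝ) 1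
      · have : (fun x : Eucl n => (x, s)) ⁻¹' A = (s • ·) ⁻¹' M := by
          ext x; simp only [hA, mem_setOf_eq, mem_preimage]
          exact ⟨fun h => h.2, fun h => ⟨hs, h⟩⟩
        rw [this, Measure.addHaar_preimage_smul volume (ne_of_gt hs.1), hMnull, mul_zero]
      · have : (fun x : Eucl n => (x, s)) ⁻¹' A = ∅ := by
          ext x; simp only [hA, mem_setOf_eq, mem_preimage, mem_empty_iff_false, iff_false]
          intro h; exact hs h.1
        simp [this]
    simp only [hslice]
    simp
  have := (Measure.measure_prod_null mA).1 hAnull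
  filter_upwards [this] with x hx
  simp only [Pi.zero_apply] at hx
  refine le_antisymm (le_trans (measure_mono ?_) hx.le) zero_le
  exact fun s hs => (⟨hs.1, hNM hs.2⟩ : s ∈ Prod.mk x ⁻¹' A)


lemma aux_phi_nonneg {n : ℕ} {ω : Eucl n → ℝ} {L : ℝ≥0} (hωLip : LipschitzWith L ω)
    (hω0 : ω 0 = 0) {x' : Eucl n} {c : ℝ} (hc : 0 ≤ c)
    {G : Set ℝ} (hGnull : volume (Ioc (0:ℝ) 1 \ G) = 0)
    (hG : ∀ s ∈ G ∩ Ioo (0:ℝ) 1, DifferentiableAt ℝ ω (s • x') ∧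
        ⟪(s • x' : Eucl n), gradient ω (s • x')⟫ ≤ ω (s • x') + c) :
    ∀ s ∈ Icc (0:ℝ) 1, s * ω x' - (1 - s) * c ≤ ω (s • x') := by
  set A : ℝ := (L : ℝ) * ‖x'‖ with hA
  have hAnn : 0 ≤ A := by positivity
  set g : ℝ → ℝ := fun σ => ω (σ • x') with hg
  have hgcont : Continuous g := hωLip.continuous.comp (continuous_id.smul continuous_const)
  have hglip : ∀ t u : ℝ, g u - g t ≤ A * |u - t| := by
    intro t u
    have h1 : |g u - g t| ≤ A * |u - t| := by
      have h2 := hωLip.dist_le_mul (u • x') (t • x')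
      rw [dist_eq_norm, dist_eq_norm, ← sub_smul, norm_smul] at h2
      calc |g u - g t| = ‖g u - g t‖ := (Real.norm_eq_abs _).symm
        _ ≤ (L:ℝ) * (‖(u - t : ℝ)‖ * ‖x'‖) := h2
        _ = A * |u - t| := by rw [hA, Real.norm_eq_abs]; ring
    exact (le_abs_self _).trans h1
  have hgbd : ∀ t : ℝ, |t| ≤ 1 → |g t| ≤ A := by
    intro t ht
    have hg00 : g 0 = 0 := by simp [hg, hω0]
    have h1 := hglip 0 t
    have h2 := hglip t 0
    rw [hg00] at h1 h2
    simp only [sub_zero, zero_sub, abs_neg] at h1 h2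
    have h3 : A * |t| ≤ A := by nlinarith [abs_nonneg t]
    rw [abs_le]; exact ⟨by linarith, by linarith⟩
  intro s hs
  rcases eq_or_lt_of_le hs.1 with h0 | hspos
  · rw [← h0]
    simp only [zero_smul, zero_mul]
    rw [hω0]; linarith
  rcases eq_or_lt_of_le hs.2 with h1 | hslt1
  · rw [h1, one_smul]; simp
  -- 0 < s < 1
  set ψ : ℝ → ℝ := fun σ => (g σ + c) / σ with hψ
  have hψcont : ContinuousOn ψ (Icc s 1) := by
    apply ContinuousOn.div ((hgcont.continuousOn).add continuousOn_const) continuousOn_id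
    intro σ hσ
    exact ne_of_gt (lt_of_lt_of_le hspos hσ.1)
  set K : ℝ := A / s + (A + c) / s ^ 2 with hK
  clear_value K
  have hψK : ∀ t ∈ Icc s 1, ∀ u ∈ Icc s 1, t ≤ u → ψ u - ψ t ≤ K * (u - t) := by
    intro t ht u hu htu
    have hts : 0 < t := lt_of_lt_of_le hspos ht.1
    have hus : 0 < u := lt_of_lt_of_le hspos hu.1
    have key : ψ u - ψ t = (g u - g t) / u - (g t + c) * ((u - t) / (u * t)) := by
      rw [hψ]; field_simp; ring
    have ht1 : |g t| ≤ A := hgbd t (by rw [abs_of_pos hts]; exact ht.2)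
    have b1 : (g u - g t) / u ≤ A * (u - t) / s := by
      have h1 : g u - g t ≤ A * (u - t) := by
        have h2 := hglip t u
        rwa [abs_of_nonneg (by linarith : (0:ℝ) ≤ u - t)] at h2
      calc (g u - g t) / u ≤ A * (u - t) / u := by
            exact (div_le_div_iff_of_pos_right hus).mpr h1
        _ ≤ A * (u - t) / s := by
            apply div_le_div_of_nonneg_left (by nlinarith) hspos (ht.1.trans htu)
    have hXnn : 0 ≤ (u - t) / (u * t) := div_nonneg (by linarith) (by positivity)
    have hss : s * s ≤ u * t := mul_le_mul (ht.1.trans htu) ht.1 hspos.le hus.le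
    have hXle : (u - t) / (u * t) ≤ (u - t) / s ^ 2 := by
      apply div_le_div_of_nonneg_left (by linarith) (by positivity) (by nlinarith [hss])
    have b2 : -(g t + c) * ((u - t) / (u * t)) ≤ (A + c) * ((u - t) / s ^ 2) := by
      have h4 : -(g t + c) ≤ A + c := by
        have := (abs_le.1 ht1).1; linarith
      calc -(g t + c) * ((u - t) / (u * t)) ≤ (A + c) * ((u - t) / (u * t)) :=
            mul_le_mul_of_nonneg_right h4 hXnn
        _ ≤ (A + c) * ((u - t) / s ^ 2) := mul_le_mul_of_nonneg_left hXle (by linarith)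
    have hKeq : K * (u - t) = A * (u - t) / s + (A + c) * ((u - t) / s ^ 2) := by
      rw [hK]; ring
    rw [neg_mul] at b2
    linarith [key, b1, b2]
  -- derivative bound on good points
  have hder : ∀ σ ∈ G ∩ Ioo s 1, ∃ ψ', HasDerivAt ψ ψ' σ ∧ ψ' ≤ 0 := by
    rintro σ ⟨hσG, hσs, hσ1⟩
    have hσpos : 0 < σ := lt_trans hspos hσs
    obtain ⟨hdiff, hbound⟩ := hG σ ⟨hσG, hσpos, hσ1⟩
    have hline : HasDerivAt (fun σ : ℝ => σ • x') x' σ := by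
      simpa using (hasDerivAt_id σ).smul_const x'
    have hgder : HasDerivAt g (fderiv ℝ ω (σ • x') x') σ :=
      hdiff.hasFDerivAt.comp_hasDerivAt σ hline
    have hψder : HasDerivAt ψ
        ((fderiv ℝ ω (σ • x') x' * σ - (g σ + c) * 1) / σ ^ 2) σ :=
      (hgder.add_const c).div (hasDerivAt_id σ) (ne_of_gt hσpos)
    refine ⟨_, hψder, ?_⟩
    have hgrad : (fderiv ℝ ω (σ • x')) x' = ⟪gradient ω (σ • x'), x'⟫ := by
      rw [gradient]
      rw [InnerProductSpace.toDual_symm_apply]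
    have hnum : fderiv ℝ ω (σ • x') x' * σ - (g σ + c) ≤ 0 := by
      have h5 : ⟪(σ • x' : Eucl n), gradient ω (σ • x')⟫
          = σ * ⟪gradient ω (σ • x'), x'⟫ := by
        rw [real_inner_smul_left, real_inner_comm]
      rw [hgrad]
      have := hbound
      rw [h5] at this
      have hgσ : g σ = ω (σ • x') := rfl
      rw [hgσ]; linarith [this]
    apply div_nonpos_of_nonpos_of_nonneg
    · linarith [hnum]
    · positivity
  -- apply the main comparison on [s, 1]
  have hfinal : ψ 1 - ψ s ≤ 0 * (1 - s) := by
    apply aux_deriv_le_const (le_of_lt hslt1) hψcont hψK hder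
    have hsub : Ioo s 1 \ (G ∩ Ioo s 1) ⊆ Ioc (0:ℝ) 1 \ G := by
      rintro σ ⟨hσ, hσG⟩
      refine ⟨⟨lt_trans hspos hσ.1, le_of_lt hσ.2⟩, fun hG' => hσG ⟨hG', hσ⟩⟩
    exact le_antisymm ((measure_mono hsub).trans (le_of_eq hGnull)) zero_le
  rw [zero_mul] at hfinal
  have hψ1 : ψ 1 = ω x' + c := by rw [hψ]; simp [hg]
  have hψs : ψ s = (g s + c) / s := rfl
  rw [hψ1, hψs] at hfinal
  have h7 : ω x' + c ≤ (g s + c) / s := by linarith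
  have h8 : (ω x' + c) * s ≤ g s + c := (le_div_iff₀ hspos).1 h7
  have hgs : g s = ω (s • x') := rfl
  rw [← hgs]
  linarith [h8]

/-! ### Auxiliary lemmas for the proof of `visibility_of_gradient_bound` -/

lemma initE_apply {n : ℕ} (x : Eucl (n+1)) (i : Fin n) : initE x i = x i.castSucc := rfl

lemma initE_snocE {n : ℕ} (x' : Eucl n) (t : ℝ) : initE (snocE x' t) = x' := by
  ext i
  simp [initE, snocE, Fin.init_snoc]
  exact congrFun (Fin.init_snoc (α := fun _ => ℝ) _ _) i

lemma lastE_snocE {n : ℕ} (x' : Eucl n) (t : ℝ) : lastE (snocE x' t) = t := by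
  simp [lastE, snocE]

lemma initE_comb {n : ℕ} (a b : ℝ) (x y : Eucl (n+1)) :
    initE (a • x + b • y) = a • initE x + b • initE y := by
  ext i
  simp [initE_apply]

lemma lastE_comb {n : ℕ} (a b : ℝ) (x y : Eucl (n+1)) :
    lastE (a • x + b • y) = a * lastE x + b * lastE y := rfl

lemma initE_sub {n : ℕ} (x y : Eucl (n+1)) : initE (x - y) = initE x - initE y := rfl

lemma lastE_sub {n : ℕ} (x y : Eucl (n+1)) : lastE (x - y) = lastE x - lastE y := rfl

lemma norm_initE_le {n : ℕ} (x : Eucl (n+1)) : ‖initE x‖ ≤ ‖x‖ := by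
  rw [EuclideanSpace.norm_eq, EuclideanSpace.norm_eq]
  apply Real.sqrt_le_sqrt
  rw [Fin.sum_univ_castSucc]
  have h1 : ∀ i : Fin n, ‖initE x i‖ ^ 2 = ‖x i.castSucc‖ ^ 2 := fun i => by rw [initE_apply]
  simp_rw [h1]
  have h2 : (0:ℝ) ≤ ‖x (Fin.last n)‖ ^ 2 := sq_nonneg _
  linarith

lemma abs_lastE_le {n : ℕ} (x : Eucl (n+1)) : |lastE x| ≤ ‖x‖ := by
  rw [EuclideanSpace.norm_eq]
  rw [Fin.sum_univ_castSucc]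
  rw [show |lastE x| = Real.sqrt (‖x (Fin.last n)‖ ^ 2) by
    rw [Real.sqrt_sq_eq_abs, abs_norm]; rfl]
  apply Real.sqrt_le_sqrt
  have h2 : (0:ℝ) ≤ ∑ i : Fin n, ‖x i.castSucc‖ ^ 2 := by positivity

  linarith

lemma lipschitz_initE {n : ℕ} : LipschitzWith 1 (initE (n := n)) := by
  refine LipschitzWith.of_dist_le_mul fun x y => ?_
  rw [NNReal.coe_one, one_mul, dist_eq_norm, dist_eq_norm, ← initE_sub]
  exact norm_initE_le (x - y)

lemma lipschitz_lastE {n : ℕ} : LipschitzWith 1 (lastE (n := n)) := by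
  refine LipschitzWith.of_dist_le_mul fun x y => ?_
  rw [NNReal.coe_one, one_mul, dist_eq_norm, dist_eq_norm, ← lastE_sub]
  rw [Real.norm_eq_abs]
  exact abs_lastE_le (x - y)

set_option maxHeartbeats 1000000 in
/-- If `Ω` is locally the epigraph of the Lipschitz function `ω` near
`0 ∈ ∂Ω` and `⟨x', ∇ω(x')⟩ ≤ ω(x') + u(|x'|)` a.e., where `u` is non-decreasing on
`(0,T)` and satisfies (V1)–(V2), then `Ω` satisfies the visibility property at `0`. -/
theorem visibility_of_gradient_bound {n : ℕ}
    (Ω : Set (Eucl (n+1))) (hΩ : IsOpen Ω) (h0 : (0 : Eucl (n+1)) ∈ frontier Ω)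
    (ρ m : ℝ) (hρ : 0 < ρ) (hm : 0 < m)
    (ω : Eucl n → ℝ) (L : ℝ≥0) (hωLip : LipschitzWith L ω) (hω0 : ω 0 = 0)
    (hωm : ∀ x' : Eucl n, ‖x'‖ < ρ → |ω x'| < m)
    (hrep : GraphRep Ω ω ρ m)
    (T : ℝ) (u u' : ℝ → ℝ)
    (hV12 : VisibilityV12 u u' T) (hmono : MonotoneOn u (Ioo (0:ℝ) T))
    (hgrad : ∀ᵐ x' ∂(volume : Measure (Eucl n)),
      ‖x'‖ < ρ → ‖x'‖ < T → DifferentiableAt ℝ ω x' →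
        ⟪x', gradient ω x'⟫ ≤ ω x' + u ‖x'‖) :
    ∃ (T' : ℝ) (u₁ u₁' : ℝ → ℝ), Visibility Ω u₁ u₁' T' := by
  classical
  obtain ⟨hT, hu0, hu'0, hucont, hu'cont, huderiv, hu'bd, huint⟩ := hV12
  -- basic bounds on u from the mean value theorem
  have hubd : ∀ t : ℝ, 0 ≤ t → t < T → 0 ≤ u t ∧ u t ≤ t / 2 := by
    intro t ht0 htT
    rcases eq_or_lt_of_le ht0 with h | h
    · rw [← h, hu0]; norm_num
    · have hcont' : ContinuousOn u (Icc 0 t) :=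
        hucont.mono (fun z hz => ⟨hz.1, lt_of_le_of_lt hz.2 htT⟩)
      have hderiv' : ∀ z ∈ Ioo (0:ℝ) t, HasDerivAt u (u' z) z :=
        fun z hz => huderiv z ⟨hz.1, lt_trans hz.2 htT⟩
      obtain ⟨c, hc, hceq⟩ := exists_hasDerivAt_eq_slope u u' h hcont' hderiv'
      have hbd := hu'bd c ⟨le_of_lt hc.1, lt_trans hc.2 htT⟩
      rw [hu0, sub_zero, sub_zero] at hceq
      have h1 : u t = u' c * t := by
        field_simp at hceq
        linarith [hceq]
      constructor
      · rw [h1]; exact mul_nonneg hbd.1 ht0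
      · rw [h1]; nlinarith [hbd.2]
  set T' : ℝ := min T (min ρ m) with hT'def
  have hT'pos : 0 < T' := lt_min hT (lt_min hρ hm)
  have hT'T : T' ≤ T := min_le_left _ _
  have hT'ρ : T' ≤ ρ := (min_le_right _ _).trans (min_le_left _ _)
  have hT'm : T' ≤ m := (min_le_right _ _).trans (min_le_right _ _)
  refine ⟨T', u, u', ⟨hT'pos, hu0, hu'0,
    hucont.mono (fun z hz => ⟨hz.1, lt_of_lt_of_le hz.2 hT'T⟩),
    hu'cont.mono (fun z hz => ⟨hz.1, lt_of_lt_of_le hz.2 hT'T⟩),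
    fun z hz => huderiv z ⟨hz.1, lt_of_lt_of_le hz.2 hT'T⟩,
    fun z hz => hu'bd z ⟨hz.1, lt_of_lt_of_le hz.2 hT'T⟩,
    huint.mono_set (Ioo_subset_Ioo le_rfl hT'T)⟩, ?_⟩
  -- (V3) : the visibility condition
  intro t ht x hx
  have htpos : 0 < t := ht.1
  have htT : t < T := lt_of_lt_of_le ht.2 hT'T
  have htρ : t < ρ := lt_of_lt_of_le ht.2 hT'ρ
  have htm : t < m := lt_of_lt_of_le ht.2 hT'm
  have hut := hubd t (le_of_lt htpos) htT
  obtain ⟨hxf, hxb⟩ := hx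
  have hxt : ‖x‖ < t := by rwa [mem_ball, dist_zero_right] at hxb
  -- the full-measure set of good base points
  have hdiffae : ∀ᵐ x' ∂(volume : Measure (Eucl n)), DifferentiableAt ℝ ω x' :=
    hωLip.ae_differentiableAt
  set N : Set (Eucl n) := {x' | ¬ (DifferentiableAt ℝ ω x' ∧
      (‖x'‖ < ρ → ‖x'‖ < T → ⟪x', gradient ω x'⟫ ≤ ω x' + u ‖x'‖))} with hNdef
  have hNnull : volume N = 0 := by
    have hALL : ∀ᵐ x' ∂(volume : Measure (Eucl n)), DifferentiableAt ℝ ω x' ∧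
        (‖x'‖ < ρ → ‖x'‖ < T → ⟪x', gradient ω x'⟫ ≤ ω x' + u ‖x'‖) := by
      filter_upwards [hgrad, hdiffae] with x' h1 h2
      exact ⟨h2, fun ha hb => h1 ha hb h2⟩
    rw [ae_iff] at hALL
    exact hALL
  have hGae := aux_ae_slice hNnull
  set Good : Set (Eucl n) :=
    {x' | volume {s : ℝ | s ∈ Ioc (0:ℝ) 1 ∧ s • x' ∈ N} = 0} with hGooddef
  have hGoodc : volume Goodᶜ = 0 := by
    rw [ae_iff] at hGae
    exact hGae
  -- main pointwise inequality for good base points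
  have hQgood : ∀ x' : Eucl n, x' ∈ Good → ‖x'‖ < t →
      ∀ s ∈ Icc (0:ℝ) 1, s * ω x' - (1 - s) * u t ≤ ω (s • x') := by
    intro x' hx' hxt' s hss
    by_cases hx0 : x' = 0
    · subst hx0
      simp only [smul_zero, hω0, mul_zero]
      nlinarith [hut.1, hss.1, hss.2]
    · refine aux_phi_nonneg hωLip hω0 hut.1 (G := {s : ℝ | s • x' ∉ N}) ?_ ?_ s hss
      · have heq : Ioc (0:ℝ) 1 \ {s : ℝ | s • x' ∉ N}
            = {s : ℝ | s ∈ Ioc (0:ℝ) 1 ∧ s • x' ∈ N} := by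
          ext z
          simp only [mem_diff, mem_setOf_eq, not_not, mem_Ioc]
        rw [heq]
        exact hx'
      · rintro σ ⟨hσN, hσ0, hσ1⟩
        have hσmem : σ • x' ∉ N := hσN
        simp only [hNdef, mem_setOf_eq, not_not] at hσmem
        obtain ⟨hdiff, hbound⟩ := hσmem
        have hnorm : ‖σ • x'‖ = σ * ‖x'‖ := by
          rw [norm_smul, Real.norm_eq_abs, abs_of_pos hσ0]
        have hx'pos : 0 < ‖x'‖ := norm_pos_iff.2 hx0
        have hlt : ‖σ • x'‖ < t := by
          rw [hnorm]
          nlinarith [hσ1, hx'pos]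
        have hboundT : ⟪(σ • x' : Eucl n), gradient ω (σ • x')⟫
            ≤ ω (σ • x') + u ‖σ • x'‖ :=
          hbound (lt_trans hlt htρ) (lt_trans hlt htT)
        refine ⟨hdiff, hboundT.trans ?_⟩
        have hmon : u ‖σ • x'‖ ≤ u t := by
          apply hmono ⟨by rw [hnorm]; positivity, lt_trans hlt htT⟩ ⟨htpos, htT⟩ (le_of_lt hlt)
        linarith
  -- extension to all base points by density
  have hQ : ∀ x' : Eucl n, ‖x'‖ < t →
      ∀ s ∈ Icc (0:ℝ) 1, s * ω x' - (1 - s) * u t ≤ ω (s • x') := by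
    intro x' hxt' s hss
    refine le_of_forall_pos_le_add fun ε εpos => ?_
    set r : ℝ := min (ε / (2 * ((L:ℝ) + 1))) ((t - ‖x'‖) / 2) with hrdef
    have hrpos : 0 < r := by
      apply lt_min (by positivity)
      nlinarith [hxt']
    have hne : (ball x' r ∩ Good).Nonempty := by
      by_contra hemp
      rw [not_nonempty_iff_eq_empty] at hemp
      have hsub : ball x' r ⊆ Goodᶜ := by
        intro z hz hzG
        have hmem : z ∈ ball x' r ∩ Good := ⟨hz, hzG⟩
        rw [hemp] at hmem
        exact hmem
      have := measure_mono (μ := (volume : Measure (Eucl n))) hsub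
      rw [hGoodc] at this
      exact absurd (le_antisymm this zero_le) (ne_of_gt (measure_ball_pos volume x' hrpos))
    obtain ⟨y, hyb, hyG⟩ := hne
    have hyd : dist y x' < r := mem_ball.1 hyb
    have hyt : ‖y‖ < t := by
      have h1 : ‖y‖ - ‖x'‖ ≤ dist y x' := by
        rw [dist_eq_norm]
        exact norm_sub_norm_le y x'
      have h2 : r ≤ (t - ‖x'‖) / 2 := min_le_right _ _
      nlinarith [hxt']
    have hQy := hQgood y hyG hyt s hss
    have hw1 : ω x' - ω y ≤ (L:ℝ) * r := by
      have := hωLip.dist_le_mul x' y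
      rw [Real.dist_eq] at this
      have h3 : |ω x' - ω y| ≤ (L:ℝ) * dist x' y := this
      rw [dist_comm] at h3
      nlinarith [le_abs_self (ω x' - ω y), h3, hyd, NNReal.coe_nonneg L]
    have hw2 : ω (s • y) - ω (s • x') ≤ (L:ℝ) * r := by
      have := hωLip.dist_le_mul (s • y) (s • x')
      rw [Real.dist_eq] at this
      have h4 : dist (s • y) (s • x') ≤ dist y x' := by
        rw [dist_eq_norm, dist_eq_norm, ← smul_sub, norm_smul, Real.norm_eq_abs,
          abs_of_nonneg hss.1]
        nlinarith [norm_nonneg (y - x'), hss.2]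
      nlinarith [le_abs_self (ω (s • y) - ω (s • x')), this, h4, hyd, NNReal.coe_nonneg L]
    have hr1 : r ≤ ε / (2 * ((L:ℝ) + 1)) := min_le_left _ _
    have h2Lr : 2 * (L:ℝ) * r ≤ ε := by
      have h5 : 2 * ((L:ℝ) + 1) * r ≤ ε := by
        calc 2 * ((L:ℝ) + 1) * r ≤ 2 * ((L:ℝ) + 1) * (ε / (2 * ((L:ℝ) + 1))) := by
              nlinarith [hr1, NNReal.coe_nonneg L]
          _ = ε := by field_simp
      nlinarith [hrpos.le, NNReal.coe_nonneg L]
    nlinarith [hQy, hw1, hw2, hss.1, hss.2, hrpos.le, NNReal.coe_nonneg L]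
  -- geometric description of the boundary point
  set x' : Eucl n := initE x with hx'def
  have hx't : ‖x'‖ < t := lt_of_le_of_lt (norm_initE_le x) hxt
  have hx'ρ : ‖x'‖ < ρ := lt_trans hx't htρ
  have hlx : |lastE x| < m := lt_trans (lt_of_le_of_lt (abs_lastE_le x) hxt) htm
  have hωx' : |ω x'| < m := hωm x' hx'ρ
  have hmem_of : ∀ y : Eucl (n+1), ‖initE y‖ < ρ → |lastE y| < 3*m →
      (y ∈ Ω ↔ ω (initE y) < lastE y) := by
    intro y h1 h2
    constructor
    · intro hyΩ
      have : y ∈ Ω ∩ {z : Eucl (n+1) | ‖initE z‖ < ρ ∧ |lastE z| < 3*m} := ⟨hyΩ, h1, h2⟩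
      rw [hrep] at this
      exact this.2.1
    · intro hlt
      have hy3m : lastE y < 3*m := lt_of_le_of_lt (le_abs_self _) h2
      have : y ∈ {z : Eucl (n+1) | ‖initE z‖ < ρ ∧ ω (initE z) < lastE z ∧ lastE z < 3*m} :=
        ⟨h1, hlt, hy3m⟩
      rw [← hrep] at this
      exact this.1
  have hform : lastE x = ω x' := by
    rcases lt_trichotomy (lastE x) (ω x') with hl | he | hg
    · -- x would be in the complement of the closure
      exfalso
      set V : Set (Eucl (n+1)) := {y | ‖initE y‖ < ρ ∧ |lastE y| < 3*m ∧ lastE y < ω (initE y)}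
        with hVdef
      have hVopen : IsOpen V := by
        have hc1 : Continuous fun y : Eucl (n+1) => ‖initE y‖ :=
          continuous_norm.comp lipschitz_initE.continuous
        have hc2 : Continuous fun y : Eucl (n+1) => |lastE y| :=
          continuous_abs.comp lipschitz_lastE.continuous
        have hc3 : Continuous fun y : Eucl (n+1) => ω (initE y) :=
          hωLip.continuous.comp lipschitz_initE.continuous
        exact (isOpen_lt hc1 continuous_const).inter
          ((isOpen_lt hc2 continuous_const).inter
            (isOpen_lt lipschitz_lastE.continuous hc3))
      have hxV : x ∈ V := ⟨hx'ρ, by nlinarith [hlx], hl⟩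
      obtain ⟨z, hzV, hzΩ⟩ :=
        mem_closure_iff.1 (frontier_subset_closure hxf) V hVopen hxV
      have := (hmem_of z hzV.1 hzV.2.1).1 hzΩ
      linarith [hzV.2.2]
    · exact he
    · -- x would be in the open set Ω
      exfalso
      have hxΩ : x ∈ Ω := (hmem_of x hx'ρ (by nlinarith [hlx])).2 hg
      rw [hΩ.frontier_eq] at hxf
      exact hxf.2 hxΩ
  -- the segment avoids Ω
  rw [Set.disjoint_left]
  rintro p hp hpΩ
  obtain ⟨a, b, ha, hb, hab, rfl⟩ := hp
  have hb1 : b ≤ 1 := by linarith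
  have hinit : initE (a • vertexPt u t + b • x) = b • x' := by
    rw [show vertexPt u t = snocE (0 : Eucl n) (-(u t)) from rfl, initE_comb, initE_snocE,
      smul_zero, zero_add, hx'def]
  have hlast : lastE (a • vertexPt u t + b • x) = b * ω x' - a * u t := by
    rw [show vertexPt u t = snocE (0 : Eucl n) (-(u t)) from rfl, lastE_comb, lastE_snocE, hform]
    ring
  have h1 : ‖initE (a • vertexPt u t + b • x)‖ < ρ := by
    rw [hinit, norm_smul, Real.norm_eq_abs, abs_of_nonneg hb]
    nlinarith [norm_nonneg x', hx'ρ]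
  have h2 : |lastE (a • vertexPt u t + b • x)| < 3*m := by
    rw [hlast]
    have habs : |b * ω x' - a * u t| ≤ b * |ω x'| + a * u t := by
      calc |b * ω x' - a * u t| ≤ |b * ω x'| + |a * u t| := abs_sub _ _
        _ = b * |ω x'| + a * u t := by
            rw [abs_mul, abs_mul, abs_of_nonneg hb, abs_of_nonneg ha,
              abs_of_nonneg hut.1]
    nlinarith [hut.2, htm, hωx', habs, hm]
  have h3 := (hmem_of _ h1 h2).1 hpΩ
  rw [hinit, hlast] at h3
  have h4 := hQ x' hx't b ⟨hb, hb1⟩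
  have hab' : a = 1 - b := by linarith
  rw [hab'] at h3
  linarith
end
end

section
/- Let Ω ⊂ ℝⁿ be open with Lipschitz boundary, 0 ∈ ∂Ω, locally the epigraph of a Lipschitz ω with ω(0)=0. The following are equivalent: (i) Ω satisfies the visibility property at 0 (conditions (V1), (V2), (V3) with centered balls B_t and points U_t = −u(t)e_n); (ii) there exist R > 0 and v ∈ C¹((0,R)) satisfying (V1), (V2), and the off-centric condition (V3'): for all 0 < r < R, any segment joining V_r = −v(r)e_n with a point of ∂Ω ∩ B_r(V_r) does not intersect Ω. -/
open MeasureTheory Metric Set Filter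
open scoped Topology ENNReal NNReal RealInnerProductSpace

noncomputable section

section VisAux

open MeasureTheory
open scoped Pointwise

lemma norm_snocE_zero {n : ℕ} (a : ℝ) : ‖(snocE (0 : Eucl n) a : Eucl (n+1))‖ = |a| := by
  rw [EuclideanSpace.norm_eq, Fin.sum_univ_castSucc]
  simp [snocE, Real.sqrt_sq_eq_abs]

lemma norm_vertexPt {n : ℕ} (u : ℝ → ℝ) (t : ℝ) :
    ‖(vertexPt u t : Eucl (n+1))‖ = |u t| := by
  rw [show (vertexPt u t : Eucl (n+1)) = snocE 0 (-(u t)) from rfl, norm_snocE_zero, abs_neg]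

/-- From (V1): `0 ≤ u t ≤ t/2` on `[0,T)`. -/
lemma u_bounds {u u' : ℝ → ℝ} {T : ℝ} (h : VisibilityV12 u u' T) :
    ∀ t ∈ Ico (0:ℝ) T, 0 ≤ u t ∧ u t ≤ t/2 := by
  obtain ⟨hT, hu0, hu'0, hcu, hcu', hderiv, hbnd, -⟩ := h
  intro t ht
  rcases eq_or_lt_of_le ht.1 with h0 | h0
  · simp [← h0, hu0]
  have hsub : Icc (0:ℝ) t ⊆ Ico 0 T := Icc_subset_Ico_right ht.2
  have hint : interior (Icc (0:ℝ) t) = Ioo 0 t := interior_Icc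
  have hmemIoo : ∀ x ∈ Ioo (0:ℝ) t, x ∈ Ioo (0:ℝ) T := fun x hx =>
    ⟨hx.1, lt_of_lt_of_le hx.2 (le_of_lt ht.2)⟩
  constructor
  · have hmono : MonotoneOn u (Icc 0 t) := by
      apply monotoneOn_of_deriv_nonneg (convex_Icc 0 t) (hcu.mono hsub)
      · intro x hx
        rw [hint] at hx
        exact ((hderiv x (hmemIoo x hx)).differentiableAt).differentiableWithinAt
      · intro x hx
        rw [hint] at hx
        rw [(hderiv x (hmemIoo x hx)).deriv]
        exact (hbnd x ⟨le_of_lt (hmemIoo x hx).1, (hmemIoo x hx).2⟩).1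
    have := hmono (left_mem_Icc.2 (le_of_lt h0)) (right_mem_Icc.2 (le_of_lt h0)) (le_of_lt h0)
    rwa [hu0] at this
  · have hmono : MonotoneOn (fun s => s/2 - u s) (Icc 0 t) := by
      apply monotoneOn_of_deriv_nonneg (convex_Icc 0 t)
      · exact (continuousOn_id.div_const 2).sub (hcu.mono hsub)
      · intro x hx
        rw [hint] at hx
        have hD : HasDerivAt (fun s : ℝ => s / 2 - u s) (1 / 2 - u' x) x := by
          exact ((hasDerivAt_id x).div_const 2).sub (hderiv x (hmemIoo x hx))
        exact hD.differentiableAt.differentiableWithinAt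
      · intro x hx
        rw [hint] at hx
        have hD : HasDerivAt (fun s : ℝ => s / 2 - u s) (1 / 2 - u' x) x := by
          exact ((hasDerivAt_id x).div_const 2).sub (hderiv x (hmemIoo x hx))
        rw [hD.deriv]
        have := (hbnd x ⟨le_of_lt (hmemIoo x hx).1, (hmemIoo x hx).2⟩).2
        linarith
    have := hmono (left_mem_Icc.2 (le_of_lt h0)) (right_mem_Icc.2 (le_of_lt h0)) (le_of_lt h0)
    simp only [hu0] at this
    linarith [this]

/-- Rescaling `u ↦ u ∘ (2·)` preserves (V1)-(V2) after shrinking the interval. -/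
lemma V12_double {u u' : ℝ → ℝ} {T : ℝ} (h : VisibilityV12 u u' T) :
    ∃ T' : ℝ, 0 < T' ∧ 2 * T' ≤ T ∧
      VisibilityV12 (fun t => u (2 * t)) (fun t => 2 * u' (2 * t)) T' := by
  obtain ⟨hT, hu0, hu'0, hcu, hcu', hderiv, hbnd, hint⟩ := h
  -- find δ > 0 with u' < 1/4 on [0, δ)
  have hc0 : ContinuousWithinAt u' (Ico 0 T) 0 := hcu' 0 ⟨le_refl 0, hT⟩
  have hmem4 : u' ⁻¹' Iio (1/4) ∈ 𝓝[Ico (0:ℝ) T] 0 := by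
    apply hc0
    rw [hu'0]
    exact Iio_mem_nhds (by norm_num)
  obtain ⟨ε, hε, hball⟩ := Metric.mem_nhdsWithin_iff.1 hmem4
  refine ⟨min ε T / 2, by positivity, by
      have := min_le_right ε T; linarith, ?_⟩
  set T' := min ε T / 2 with hT'def
  have hmem : ∀ t ∈ Ico (0:ℝ) T', 2 * t ∈ Ico (0:ℝ) T := by
    intro t ht
    have h1 : t < min ε T / 2 := ht.2
    have h2 : min ε T ≤ T := min_le_right ε T
    exact ⟨by linarith [ht.1], by linarith⟩
  have hmemo : ∀ t ∈ Ioo (0:ℝ) T', 2 * t ∈ Ioo (0:ℝ) T := fun t ht =>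
    ⟨by linarith [ht.1], ((hmem t ⟨le_of_lt ht.1, ht.2⟩).2)⟩
  have hsmall : ∀ t ∈ Ico (0:ℝ) T', u' (2 * t) < 1/4 := by
    intro t ht
    have h1 : t < min ε T / 2 := ht.2
    have h2 : min ε T ≤ ε := min_le_left ε T
    have : (2 * t) ∈ Metric.ball (0:ℝ) ε ∩ Ico 0 T := by
      constructor
      · rw [Metric.mem_ball, Real.dist_eq, sub_zero, abs_of_nonneg (by linarith [ht.1])]
        linarith
      · exact hmem t ht
    exact hball this
  have hT'pos : 0 < T' := by positivity
  have hcont2 : ContinuousOn (fun t : ℝ => 2 * t) (Ico (0:ℝ) T') :=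
    (continuous_const.mul continuous_id).continuousOn
  refine ⟨hT'pos, by simpa using hu0, by simp [hu'0], ?_, ?_, ?_, ?_, ?_⟩
  · exact hcu.comp hcont2 hmem
  · exact continuousOn_const.mul (hcu'.comp hcont2 hmem)
  · intro t ht
    have h1 := hderiv (2 * t) (hmemo t ht)
    have h2 : HasDerivAt (fun t : ℝ => 2 * t) 2 t := by
      simpa using (hasDerivAt_id t).const_mul (2:ℝ)
    have h3 : HasDerivAt (fun s : ℝ => u (2 * s)) (u' (2 * t) * 2) t := h1.comp t h2
    convert h3 using 1
    ring
  · intro t ht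
    have h1 := hbnd (2 * t) (hmem t ht)
    have h2 := hsmall t ht
    refine ⟨by simp only; linarith [h1.1], by simp only; linarith⟩
  · -- the summability condition
    set g : ℝ → ℝ := fun σ => Real.sqrt (u σ / σ + u' σ) with hg
    set γ : ℝ → ℝ := fun τ => τ⁻¹ * sSup (g '' Ioc 0 τ) with hγ
    have himg : ∀ t : ℝ, 0 < t →
        (fun s => Real.sqrt ((fun r => u (2*r)) s / s + (fun r => 2 * u' (2*r)) s)) '' Ioc 0 t
          = (fun y => Real.sqrt 2 * y) '' (g '' Ioc 0 (2*t)) := by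
      intro t ht
      have h2 : Ioc (0:ℝ) (2*t) = (fun s : ℝ => 2*s) '' Ioc 0 t := by
        rw [Set.image_mul_left_Ioc (by norm_num : (0:ℝ) < 2) 0 t, mul_zero]
      rw [h2, Set.image_image, Set.image_image]
      apply Set.image_congr
      intro s hs
      have hs0 : s ≠ 0 := ne_of_gt hs.1
      rw [← Real.sqrt_mul (by norm_num : (0:ℝ) ≤ 2)]
      congr 1
      field_simp
    have hsmulimg : ∀ S : Set ℝ,
        sSup ((fun y => Real.sqrt 2 * y) '' S) = Real.sqrt 2 * sSup S := by
      intro S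
      have h1 : (fun y : ℝ => Real.sqrt 2 * y) '' S = Real.sqrt 2 • S := by
        rw [← Set.image_smul]
        simp [smul_eq_mul]
      rw [h1, Real.sSup_smul_of_nonneg (Real.sqrt_nonneg 2), smul_eq_mul]
    have hindic : Integrable ((Ioo (0:ℝ) T).indicator γ) :=
      (integrable_indicator_iff measurableSet_Ioo).2 hint
    have hcomp : Integrable (fun t => (Ioo (0:ℝ) T).indicator γ (2 * t)) :=
      hindic.comp_mul_left' (two_ne_zero)
    have h4 : IntegrableOn (fun t => γ (2 * t)) (Ioo 0 T') volume := by
      refine hcomp.integrableOn.congr_fun ?_ measurableSet_Ioo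
      intro t ht
      simp only [Set.indicator_of_mem (hmemo t ht)]
    have h5 : IntegrableOn (fun t => (2 * Real.sqrt 2) * γ (2 * t)) (Ioo 0 T') volume :=
      h4.const_mul _
    refine h5.congr_fun ?_ measurableSet_Ioo
    intro t ht
    have ht0 : t ≠ 0 := ne_of_gt ht.1
    show (2 * Real.sqrt 2) * γ (2 * t) = _
    rw [hγ]
    simp only
    rw [himg t ht.1, hsmulimg]
    rw [mul_inv]
    ring

end VisAux

/-- The centered and off-centric forms of the visibility property at
`0 ∈ ∂Ω` are equivalent. -/
theorem visibility_iff_offcentric {n : ℕ}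
    (Ω : Set (Eucl (n+1))) (hΩ : IsOpen Ω) (h0 : (0 : Eucl (n+1)) ∈ frontier Ω)
    (ρ m : ℝ) (hρ : 0 < ρ) (hm : 0 < m)
    (ω : Eucl n → ℝ) (L : ℝ≥0) (hωLip : LipschitzWith L ω) (hω0 : ω 0 = 0)
    (hωm : ∀ x' : Eucl n, ‖x'‖ < ρ → |ω x'| < m)
    (hrep : GraphRep Ω ω ρ m) :
    (∃ (T : ℝ) (u u' : ℝ → ℝ), Visibility Ω u u' T) ↔
      (∃ (R : ℝ) (v v' : ℝ → ℝ), Visibility' Ω v v' R) := by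
  constructor
  · rintro ⟨T, u, u', h12, h3⟩
    obtain ⟨T', hT', hle, h12'⟩ := V12_double h12
    refine ⟨T', fun t => u (2*t), fun t => 2 * u' (2*t), h12', ?_⟩
    intro r hr x hx
    have hpt : (vertexPt (fun t => u (2*t)) r : Eucl (n+1)) = vertexPt u (2*r) := rfl
    have h2r : (2*r) ∈ Ioo (0:ℝ) T := ⟨by linarith [hr.1], by linarith [hr.2]⟩
    have hub := u_bounds h12 (2*r) ⟨le_of_lt h2r.1, h2r.2⟩
    have hvnorm : ‖(vertexPt u (2*r) : Eucl (n+1))‖ = u (2*r) := by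
      rw [norm_vertexPt, abs_of_nonneg hub.1]
    have hxb : x ∈ ball (0 : Eucl (n+1)) (2*r) := by
      rw [mem_ball, dist_zero_right]
      have h1 : dist x (vertexPt u (2*r)) < r := by
        have := hx.2; rw [hpt] at this; exact mem_ball.1 this
      have h2 : dist x (0 : Eucl (n+1)) ≤ dist x (vertexPt u (2*r)) +
          dist (vertexPt u (2*r)) (0 : Eucl (n+1)) := dist_triangle _ _ _
      rw [dist_zero_right, dist_zero_right, hvnorm] at h2
      have h3 : u (2*r) ≤ r := by linarith [hub.2]
      linarith
    have hdisj := h3 (2*r) h2r x ⟨hx.1, hxb⟩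
    rw [hpt]
    exact hdisj
  · rintro ⟨R, v, v', h12, h3⟩
    obtain ⟨T', hT', hle, h12'⟩ := V12_double h12
    refine ⟨T', fun t => v (2*t), fun t => 2 * v' (2*t), h12', ?_⟩
    intro t ht x hx
    have hpt : (vertexPt (fun s => v (2*s)) t : Eucl (n+1)) = vertexPt v (2*t) := rfl
    have h2t : (2*t) ∈ Ioo (0:ℝ) R := ⟨by linarith [ht.1], by linarith [ht.2]⟩
    have hub := u_bounds h12 (2*t) ⟨le_of_lt h2t.1, h2t.2⟩
    have hvnorm : ‖(vertexPt v (2*t) : Eucl (n+1))‖ = v (2*t) := by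
      rw [norm_vertexPt, abs_of_nonneg hub.1]
    have hxb : x ∈ ball (vertexPt v (2*t) : Eucl (n+1)) (2*t) := by
      rw [mem_ball]
      have h1 : dist x (0 : Eucl (n+1)) < t := mem_ball.1 hx.2
      have h2 : dist x (vertexPt v (2*t) : Eucl (n+1)) ≤ dist x (0 : Eucl (n+1)) +
          dist (0 : Eucl (n+1)) (vertexPt v (2*t)) := dist_triangle _ _ _
      rw [dist_zero_right, dist_zero_left, hvnorm] at h2
      rw [dist_zero_right] at h1
      have h3 : v (2*t) ≤ t := by linarith [hub.2]
      linarith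
    have hdisj := h3 (2*t) h2t x ⟨hx.1, hxb⟩
    rw [hpt]
    exact hdisj
end
end

section
/- Let v ∈ C¹((0,R)) satisfy v(0)=v'(0)=0 and 0 ≤ v' ≤ 1/2, and set V_r = −v(r)e_n. Then there exists a function φ ∈ C¹(B_R(V_R) ∖ {0}) with 0 ≤ φ < R such that ∂B_r(V_r) = φ⁻¹(r) for all 0 < r < R; moreover for every x ∈ B_R(V_R) ∖ {0}: (i) ∇φ(x)/|∇φ(x)| = (x − V_{φ(x)})/|x − V_{φ(x)}|; (ii) |∇φ(x) − x/|x|| ≤ 4 √( v(φ(x))/φ(x) + v'(φ(x)) ). -/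
open MeasureTheory Metric Set Filter
open scoped Topology ENNReal NNReal RealInnerProductSpace

noncomputable section

def eLast (n : ℕ) : Eucl (n+1) := EuclideanSpace.single (Fin.last n) 1
lemma norm_eLast (n : ℕ) : ‖eLast n‖ = 1 := by simp [eLast, EuclideanSpace.norm_single]
lemma vertexPt_eq {n : ℕ} (u : ℝ → ℝ) (t : ℝ) :
    vertexPt u t = (-(u t)) • eLast n := by
  ext i
  simp [vertexPt, snocE, eLast, EuclideanSpace.single_apply]
  induction i using Fin.lastCases with
  | last => simp [Fin.snoc]
  | cast i => simp [Fin.snoc, Fin.castSucc_lt_last i, (Fin.castSucc_lt_last i).ne]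
lemma sub_vertexPt {n : ℕ} (u : ℝ → ℝ) (t : ℝ) (x : Eucl (n+1)) :
    x - vertexPt u t = x + u t • eLast n := by
  rw [vertexPt_eq]; module

section Fol
variable {n : ℕ} {R : ℝ} {v v' : ℝ → ℝ}


/-- Lipschitz/monotone bounds for `v` from the derivative bounds. -/
lemma folLip (v v' : ℝ → ℝ) (hR : 0 < R)
    (hvcont : ContinuousOn v (Icc 0 R))
    (hderiv : ∀ t ∈ Ioo (0:ℝ) R, HasDerivAt v (v' t) t)
    (hv'bd : ∀ t ∈ Ico (0:ℝ) R, 0 ≤ v' t ∧ v' t ≤ 1/2) :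
    ∀ a b, 0 ≤ a → a ≤ b → b ≤ R → v a ≤ v b ∧ v b - v a ≤ (b-a)/2 := by
  intro a b ha hab hbR
  rcases eq_or_lt_of_le hab with rfl | hab
  · simp
  · obtain ⟨c, hc, hslope⟩ := exists_hasDerivAt_eq_slope v v' hab
      (hvcont.mono (Icc_subset_Icc ha hbR))
      (fun t ht => hderiv t ⟨lt_of_le_of_lt ha ht.1, lt_of_lt_of_le ht.2 hbR⟩)
    have hc' : c ∈ Ico (0:ℝ) R := ⟨le_trans ha hc.1.le, lt_of_lt_of_le hc.2 hbR⟩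
    obtain ⟨h0, h1⟩ := hv'bd c hc'
    rw [hslope] at h0 h1
    have hba : (0:ℝ) < b - a := sub_pos.2 hab
    constructor
    · have := (div_nonneg_iff.mp h0)
      rcases this with ⟨h,_⟩|⟨_,h⟩ <;> nlinarith
    · rw [div_le_iff₀ hba] at h1
      nlinarith

/-- The height function whose root defines `φ x`. -/
def folH (v : ℝ → ℝ) (n : ℕ) (x : Eucl (n+1)) (r : ℝ) : ℝ := ‖x + v r • eLast n‖ - r

lemma folH_anti (HL : ∀ a b, 0 ≤ a → a ≤ b → b ≤ R → v a ≤ v b ∧ v b - v a ≤ (b-a)/2)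
    (x : Eucl (n+1)) {a b : ℝ} (ha : 0 ≤ a) (hab : a ≤ b) (hbR : b ≤ R) :
    folH v n x b + (b-a)/2 ≤ folH v n x a := by
  obtain ⟨h1, h2⟩ := HL a b ha hab hbR
  have key : ‖x + v b • eLast n‖ ≤ ‖x + v a • eLast n‖ + (v b - v a) := by
    have : x + v b • eLast n = (x + v a • eLast n) + (v b - v a) • eLast n := by module
    rw [this]
    calc ‖(x + v a • eLast n) + (v b - v a) • eLast n‖
        ≤ ‖x + v a • eLast n‖ + ‖(v b - v a) • eLast n‖ := norm_add_le _ _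
      _ = ‖x + v a • eLast n‖ + (v b - v a) := by
          rw [norm_smul, norm_eLast, Real.norm_eq_abs, abs_of_nonneg (by linarith), mul_one]
  simp only [folH]
  linarith

open scoped Classical in
/-- The foliation function `φ`. -/
def folPhi (v : ℝ → ℝ) (R : ℝ) (n : ℕ) (x : Eucl (n+1)) : ℝ :=
  if hx : ∃ r, r ∈ Ioo (0:ℝ) R ∧ ‖x + v r • eLast n‖ = r then hx.choose else 0

lemma folPhi_spec (hR : 0 < R) (hv0 : v 0 = 0)
    (hvcont : ContinuousOn v (Icc 0 R))
    {x : Eucl (n+1)} (hx : x ∈ ball (vertexPt v R : Eucl (n+1)) R \ ({0} : Set (Eucl (n+1)))) :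
    folPhi v R n x ∈ Ioo (0:ℝ) R ∧ ‖x + v (folPhi v R n x) • eLast n‖ = folPhi v R n x := by
  have hex : ∃ r, r ∈ Ioo (0:ℝ) R ∧ ‖x + v r • eLast n‖ = r := by
    have hcont : ContinuousOn (folH v n x) (Icc 0 R) := by
      apply ContinuousOn.sub _ continuousOn_id
      exact (continuousOn_const.add (hvcont.smul continuousOn_const)).norm
    have h0 : 0 < folH v n x 0 := by
      simp only [folH, hv0, zero_smul, add_zero, sub_zero]
      exact norm_pos_iff.2 (by simpa using hx.2)
    have hRneg : folH v n x R < 0 := by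
      have := hx.1
      rw [mem_ball, dist_eq_norm, sub_vertexPt] at this
      simp only [folH]; linarith
    have : (0:ℝ) ∈ Icc (folH v n x R) (folH v n x 0) := ⟨hRneg.le, h0.le⟩
    obtain ⟨r, hr, hfr⟩ := intermediate_value_Icc' hR.le hcont this
    refine ⟨r, ⟨?_, ?_⟩, by simpa [folH, sub_eq_zero] using hfr⟩
    · rcases eq_or_lt_of_le hr.1 with rfl | h
      · exact absurd hfr (by linarith)
      · exact h
    · rcases eq_or_lt_of_le hr.2 with rfl | h
      · exact absurd hfr (by linarith)
      · exact h
  rw [folPhi, dif_pos hex]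
  exact ⟨hex.choose_spec.1, hex.choose_spec.2⟩

lemma folPhi_root_uniq (HL : ∀ a b, 0 ≤ a → a ≤ b → b ≤ R → v a ≤ v b ∧ v b - v a ≤ (b-a)/2)
    (x : Eucl (n+1)) {r s : ℝ} (hr : r ∈ Icc (0:ℝ) R) (hs : s ∈ Icc (0:ℝ) R)
    (hfr : ‖x + v r • eLast n‖ = r) (hfs : ‖x + v s • eLast n‖ = s) : r = s := by
  have hr0 : folH v n x r = 0 := by simp [folH, hfr]
  have hs0 : folH v n x s = 0 := by simp [folH, hfs]
  rcases lt_trichotomy r s with h | h | h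
  · have := folH_anti HL x hr.1 h.le hs.2
    rw [hr0, hs0] at this; linarith
  · exact h
  · have := folH_anti HL x hs.1 h.le hr.2
    rw [hr0, hs0] at this; linarith

lemma folPhi_lip (hR : 0 < R) (hv0 : v 0 = 0)
    (hvcont : ContinuousOn v (Icc 0 R))
    (HL : ∀ a b, 0 ≤ a → a ≤ b → b ≤ R → v a ≤ v b ∧ v b - v a ≤ (b-a)/2)
    {x y : Eucl (n+1)}
    (hx : x ∈ ball (vertexPt v R : Eucl (n+1)) R \ ({0} : Set (Eucl (n+1))))
    (hy : y ∈ ball (vertexPt v R : Eucl (n+1)) R \ ({0} : Set (Eucl (n+1)))) :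
    |folPhi v R n x - folPhi v R n y| ≤ 2 * ‖x - y‖ := by
  obtain ⟨hrx, hfx⟩ := folPhi_spec hR hv0 hvcont hx
  obtain ⟨hry, hfy⟩ := folPhi_spec hR hv0 hvcont hy
  set r := folPhi v R n x with hrdef
  set s := folPhi v R n y with hsdef
  have hxr0 : folH v n x r = 0 := by simp [folH, hfx]
  have hys0 : folH v n y s = 0 := by simp [folH, hfy]
  have hclose : |folH v n y r| ≤ ‖x - y‖ := by
    have : folH v n y r - folH v n x r = ‖y + v r • eLast n‖ - ‖x + v r • eLast n‖ := by
      simp only [folH]; ring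
    have h2 : |folH v n y r| = |‖y + v r • eLast n‖ - ‖x + v r • eLast n‖| := by
      rw [← this, hxr0, sub_zero]
    rw [h2]
    calc |‖y + v r • eLast n‖ - ‖x + v r • eLast n‖| ≤ ‖(y + v r • eLast n) - (x + v r • eLast n)‖ :=
          abs_norm_sub_norm_le _ _
      _ = ‖y - x‖ := by congr 1; module
      _ = ‖x - y‖ := norm_sub_rev _ _
  have hsep : |r - s|/2 ≤ |folH v n y r| := by
    rcases le_or_gt r s with h | h
    · have h1 := folH_anti HL y hrx.1.le h hry.2.le
      rw [hys0] at h1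
      have : |r - s| = s - r := by rw [abs_sub_comm]; exact abs_of_nonneg (by linarith)
      rw [this]
      exact le_trans (by linarith) (le_abs_self _)
    · have h1 := folH_anti HL y hry.1.le h.le hrx.2.le
      rw [hys0] at h1
      have : |r - s| = r - s := abs_of_nonneg (by linarith)
      rw [this]
      exact le_trans (by linarith) (neg_le_abs _)
  calc |r - s| = 2 * (|r - s|/2) := by ring
    _ ≤ 2 * ‖x - y‖ := by linarith [le_trans hsep hclose]

lemma folVC1 (hv'cont : ContinuousOn v' (Ico 0 R))
    (hderiv : ∀ t ∈ Ioo (0:ℝ) R, HasDerivAt v (v' t) t)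
    {r₀ : ℝ} (hr₀ : r₀ ∈ Ioo (0:ℝ) R) : ContDiffAt ℝ 1 v r₀ := by
  rw [contDiffAt_one_iff]
  refine ⟨fun t => ContinuousLinearMap.smulRight (1 : ℝ →L[ℝ] ℝ) (v' t), Ioo 0 R,
    isOpen_Ioo.mem_nhds hr₀, ?_, fun t ht => (hderiv t ht).hasFDerivAt⟩
  exact (ContinuousLinearMap.smulRightL ℝ ℝ ℝ (1 : ℝ →L[ℝ] ℝ)).continuous.comp_continuousOn
    (hv'cont.mono Ioo_subset_Ico_self)

set_option maxHeartbeats 2000000 in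
lemma folPhi_key (hR : 0 < R) (hv0 : v 0 = 0)
    (hvcont : ContinuousOn v (Icc 0 R)) (hv'cont : ContinuousOn v' (Ico 0 R))
    (hderiv : ∀ t ∈ Ioo (0:ℝ) R, HasDerivAt v (v' t) t)
    (hv'bd : ∀ t ∈ Ico (0:ℝ) R, 0 ≤ v' t ∧ v' t ≤ 1/2)
    {x₀ : Eucl (n+1)} (hx₀ : x₀ ∈ ball (vertexPt v R : Eucl (n+1)) R \ ({0} : Set (Eucl (n+1)))) :
    ContDiffAt ℝ 1 (folPhi v R n) x₀ ∧
    HasGradientAt (folPhi v R n)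
      ((folPhi v R n x₀ - v' (folPhi v R n x₀) *
          ⟪x₀ + v (folPhi v R n x₀) • eLast n, eLast n⟫)⁻¹ •
        (x₀ + v (folPhi v R n x₀) • eLast n)) x₀ := by
  classical
  have hS : IsOpen (ball (vertexPt v R : Eucl (n+1)) R \ ({0} : Set (Eucl (n+1)))) :=
    isOpen_ball.sdiff isClosed_singleton
  have HL := folLip v v' hR hvcont hderiv hv'bd
  set φ := folPhi v R n with hφdef
  obtain ⟨hr₀mem, hroot⟩ := folPhi_spec hR hv0 hvcont hx₀
  set r₀ := φ x₀ with hr₀def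
  set w₀ := x₀ + v r₀ • eLast n with hw₀def
  have hw : ‖w₀‖ = r₀ := hroot
  set wn := ⟪w₀, eLast n⟫ with hwndef
  have hwn : |wn| ≤ r₀ := by
    calc |wn| ≤ ‖w₀‖ * ‖eLast n‖ := abs_real_inner_le_norm _ _
    _ = r₀ := by rw [hw, norm_eLast, mul_one]
  obtain ⟨hv'0, hv'half⟩ := hv'bd r₀ ⟨hr₀mem.1.le, hr₀mem.2⟩
  set D := r₀ - v' r₀ * wn with hDdef
  have hD2 : r₀/2 ≤ D := by nlinarith [abs_le.mp hwn, hr₀mem.1]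
  have hDpos : 0 < D := lt_of_lt_of_le (by linarith [hr₀mem.1]) hD2
  set H : Eucl (n+1) × ℝ → Eucl (n+1) × ℝ := fun p =>
    (p.1, ⟪p.1 + v p.2 • eLast n, p.1 + v p.2 • eLast n⟫ - p.2 * p.2) with hHdef
  have hvC1 : ContDiffAt ℝ 1 v r₀ := folVC1 hv'cont hderiv hr₀mem
  have hgC1 : ContDiffAt ℝ 1 (fun p : Eucl (n+1) × ℝ => p.1 + v p.2 • eLast n) (x₀, r₀) :=
    contDiffAt_fst.add ((hvC1.comp (x₀, r₀) contDiffAt_snd).smul contDiffAt_const)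
  have hHc1 : ContDiffAt ℝ 1 H (x₀, r₀) :=
    contDiffAt_fst.prodMk ((hgC1.inner ℝ hgC1).sub (contDiffAt_snd.mul contDiffAt_snd))
  set c : ℝ := 2 * (v' r₀ * wn) - 2 * r₀ with hcdef
  have hcD : c = -(2*D) := by rw [hcdef, hDdef]; ring
  have hc0 : c ≠ 0 := by rw [hcD]; intro h; nlinarith
  set L2 : Eucl (n+1) × ℝ →L[ℝ] ℝ :=
    (innerSL ℝ ((2:ℝ) • w₀)).comp (ContinuousLinearMap.fst ℝ (Eucl (n+1)) ℝ) +
      c • ContinuousLinearMap.snd ℝ (Eucl (n+1)) ℝ with hL2def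
  set M2 : Eucl (n+1) × ℝ →L[ℝ] ℝ :=
    c⁻¹ • (ContinuousLinearMap.snd ℝ (Eucl (n+1)) ℝ -
      (innerSL ℝ ((2:ℝ) • w₀)).comp (ContinuousLinearMap.fst ℝ (Eucl (n+1)) ℝ)) with hM2def
  have hML : ∀ p : Eucl (n+1) × ℝ, M2 (p.1, L2 p) = p.2 := by
    intro p
    simp only [hM2def, hL2def, ContinuousLinearMap.smul_apply, ContinuousLinearMap.sub_apply,
      ContinuousLinearMap.add_apply, ContinuousLinearMap.comp_apply,
      ContinuousLinearMap.coe_fst', ContinuousLinearMap.coe_snd', smul_eq_mul]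
    field_simp
    ring
  have hLM : ∀ p : Eucl (n+1) × ℝ, L2 (p.1, M2 p) = p.2 := by
    intro p
    simp only [hM2def, hL2def, ContinuousLinearMap.smul_apply, ContinuousLinearMap.sub_apply,
      ContinuousLinearMap.add_apply, ContinuousLinearMap.comp_apply,
      ContinuousLinearMap.coe_fst', ContinuousLinearMap.coe_snd', smul_eq_mul]
    field_simp
    ring
  set A : (Eucl (n+1) × ℝ) ≃L[ℝ] (Eucl (n+1) × ℝ) :=
    ContinuousLinearEquiv.equivOfInverse
      ((ContinuousLinearMap.fst ℝ (Eucl (n+1)) ℝ).prod L2)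
      ((ContinuousLinearMap.fst ℝ (Eucl (n+1)) ℝ).prod M2)
      (fun p => by
        simp only [ContinuousLinearMap.prod_apply, ContinuousLinearMap.coe_fst']
        exact Prod.ext rfl (hML p))
      (fun p => by
        simp only [ContinuousLinearMap.prod_apply, ContinuousLinearMap.coe_fst']
        exact Prod.ext rfl (hLM p)) with hAdef
  have hA : HasFDerivAt H (A : (Eucl (n+1) × ℝ) →L[ℝ] (Eucl (n+1) × ℝ)) (x₀, r₀) := by
    have hvsnd : HasFDerivAt (fun p : Eucl (n+1) × ℝ => v p.2)
        (((1 : ℝ →L[ℝ] ℝ).smulRight (v' r₀)).comp (ContinuousLinearMap.snd ℝ (Eucl (n+1)) ℝ))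
        (x₀, r₀) :=
      (hderiv r₀ hr₀mem).hasFDerivAt.comp (x₀, r₀) hasFDerivAt_snd
    have hgd : HasFDerivAt (fun p : Eucl (n+1) × ℝ => p.1 + v p.2 • eLast n)
        (ContinuousLinearMap.fst ℝ (Eucl (n+1)) ℝ +
          ((((1 : ℝ →L[ℝ] ℝ).smulRight (v' r₀)).comp
            (ContinuousLinearMap.snd ℝ (Eucl (n+1)) ℝ)).smulRight (eLast n))) (x₀, r₀) :=
      hasFDerivAt_fst.add (hvsnd.smul_const (eLast n))
    have h2 := (hgd.inner ℝ hgd).sub (hasFDerivAt_snd.mul hasFDerivAt_snd)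
    have h1 := hasFDerivAt_fst (𝕜 := ℝ) (p := (x₀, r₀)) (E := Eucl (n+1)) (F := ℝ)
    have hfin := h1.prodMk h2
    refine hfin.congr_fderiv (Eq.symm ?_)
    have hee : ⟪(eLast n : Eucl (n+1)), eLast n⟫ = (1:ℝ) := by
      rw [real_inner_self_eq_norm_mul_norm, norm_eLast]; norm_num
    refine ContinuousLinearMap.ext fun q => ?_
    refine Prod.ext rfl ?_
    simp only [hAdef, ContinuousLinearEquiv.coe_coe, ContinuousLinearEquiv.equivOfInverse_apply,
      hL2def, hcdef, hwndef, hw₀def, ContinuousLinearMap.prod_apply, ContinuousLinearMap.add_apply,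
      ContinuousLinearMap.comp_apply, ContinuousLinearMap.coe_fst', ContinuousLinearMap.coe_snd',
      ContinuousLinearMap.smul_apply, smul_eq_mul, ContinuousLinearMap.sub_apply,
      fderivInnerCLM_apply, innerSL_apply_apply, ContinuousLinearMap.smulRight_apply,
      ContinuousLinearMap.one_apply, inner_add_left, inner_add_right, real_inner_smul_left,
      real_inner_smul_right, hee]
    rw [real_inner_comm q.1 x₀, real_inner_comm (eLast n) x₀, real_inner_comm (eLast n) q.1]
    ring
  have hstrict : HasStrictFDerivAt H
      (A : (Eucl (n+1) × ℝ) →L[ℝ] (Eucl (n+1) × ℝ)) (x₀, r₀) :=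
    hHc1.hasStrictFDerivAt' hA one_ne_zero
  have hHp0 : H (x₀, r₀) = (x₀, 0) := by
    refine Prod.ext rfl ?_
    show ⟪x₀ + v r₀ • eLast n, x₀ + v r₀ • eLast n⟫ - r₀ * r₀ = 0
    rw [← hw₀def, real_inner_self_eq_norm_mul_norm, hw]; ring
  have hφcont : ContinuousAt φ x₀ := by
    have hlip : LipschitzOnWith 2 φ (ball (vertexPt v R : Eucl (n+1)) R \ {0}) := by
      apply LipschitzOnWith.of_dist_le_mul
      intro x hx y hy
      rw [Real.dist_eq, dist_eq_norm]
      have := folPhi_lip hR hv0 hvcont HL hx hy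
      push_cast
      exact this
    exact hlip.continuousOn.continuousAt (hS.mem_nhds hx₀)
  have hev : ∀ᶠ x in 𝓝 x₀,
      (hstrict.localInverse H A (x₀, r₀)) (x, 0) = (x, φ x) := by
    have h1 := hstrict.eventually_left_inverse
    have h3 : Tendsto (fun x => (x, φ x)) (𝓝 x₀) (𝓝 (x₀, r₀)) := by
      have h2 : ContinuousAt (fun x => (x, φ x)) x₀ := continuousAt_id.prodMk hφcont
      exact h2
    filter_upwards [h3.eventually h1, hS.eventually_mem hx₀] with x h4 h5
    have hx' := folPhi_spec hR hv0 hvcont h5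
    have hHx : H (x, φ x) = (x, 0) := by
      refine Prod.ext rfl ?_
      show ⟪x + v (φ x) • eLast n, x + v (φ x) • eLast n⟫ - φ x * φ x = 0
      rw [real_inner_self_eq_norm_mul_norm, hx'.2]; ring
    rw [hHx] at h4
    exact h4
  have hGc1 : ContDiffAt ℝ 1 (hHc1.localInverse hA one_ne_zero) (x₀, 0) := by
    have := hHc1.to_localInverse hA one_ne_zero
    rwa [hHp0] at this
  have hloc_eq : hHc1.localInverse hA one_ne_zero = hstrict.localInverse H A (x₀, r₀) := rfl
  have hφC1 : ContDiffAt ℝ 1 φ x₀ := by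
    have hcomp : ContDiffAt ℝ 1 (fun x => ((hHc1.localInverse hA one_ne_zero) (x, 0)).2) x₀ :=
      contDiffAt_snd.comp x₀ (hGc1.comp x₀ (contDiffAt_id.prodMk contDiffAt_const))
    apply hcomp.congr_of_eventuallyEq
    filter_upwards [hev] with x hx
    rw [hloc_eq, hx]
  have hdiff : DifferentiableAt ℝ φ x₀ := hφC1.differentiableAt one_ne_zero
  have hL : HasFDerivAt φ (fderiv ℝ φ x₀) x₀ := hdiff.hasFDerivAt
  set Lφ := fderiv ℝ φ x₀ with hLφdef
  have hvφ : HasFDerivAt (fun x => v (φ x))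
      (((1 : ℝ →L[ℝ] ℝ).smulRight (v' r₀)).comp Lφ) x₀ :=
    (hderiv r₀ hr₀mem).hasFDerivAt.comp x₀ hL
  have hgd2 : HasFDerivAt (fun x : Eucl (n+1) => x + v (φ x) • eLast n)
      (ContinuousLinearMap.id ℝ (Eucl (n+1)) +
        ((((1 : ℝ →L[ℝ] ℝ).smulRight (v' r₀)).comp Lφ).smulRight (eLast n))) x₀ :=
    (hasFDerivAt_id x₀).add (hvφ.smul_const (eLast n))
  have hK := (hgd2.inner ℝ hgd2).sub (hL.mul hL)
  have hK0 : (fun x => ⟪x + v (φ x) • eLast n, x + v (φ x) • eLast n⟫ - φ x * φ x)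
      =ᶠ[𝓝 x₀] fun _ => (0:ℝ) := by
    filter_upwards [hS.eventually_mem hx₀] with x hx
    have hx' := folPhi_spec hR hv0 hvcont hx
    show ⟪x + v (φ x) • eLast n, x + v (φ x) • eLast n⟫ - φ x * φ x = 0
    rw [real_inner_self_eq_norm_mul_norm, hx'.2]; ring
  have hKzero : HasFDerivAt
      (fun x => ⟪x + v (φ x) • eLast n, x + v (φ x) • eLast n⟫ - φ x * φ x)
      (0 : Eucl (n+1) →L[ℝ] ℝ) x₀ :=
    (hasFDerivAt_const (0:ℝ) x₀).congr_of_eventuallyEq hK0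
  have hKeq := hK.unique hKzero
  have hpt : ∀ q : Eucl (n+1), Lφ q = D⁻¹ * ⟪w₀, q⟫ := by
    intro q
    have h5 := congrArg (fun (T : Eucl (n+1) →L[ℝ] ℝ) => T q) hKeq
    simp only [ContinuousLinearMap.sub_apply, ContinuousLinearMap.comp_apply,
      ContinuousLinearMap.add_apply, ContinuousLinearMap.coe_id', id_eq,
      ContinuousLinearMap.smulRight_apply, ContinuousLinearMap.one_apply,
      ContinuousLinearMap.smul_apply, smul_eq_mul, fderivInnerCLM_apply,
      ContinuousLinearMap.prod_apply, ContinuousLinearMap.zero_apply] at h5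
    rw [← hr₀def] at h5
    rw [← hw₀def] at h5
    simp only [inner_add_right, inner_add_left, real_inner_smul_right,
      real_inner_smul_left] at h5
    rw [real_inner_comm q w₀, real_inner_comm (eLast n) w₀] at h5
    have h7 : Lφ q * D = ⟪w₀, q⟫ := by
      rw [hDdef, hwndef, real_inner_comm q w₀, real_inner_comm (eLast n) w₀]
      linear_combination (-1/2 : ℝ) * h5
    rw [← h7]
    field_simp
  have htd : (InnerProductSpace.toDual ℝ (Eucl (n+1))) (D⁻¹ • w₀) = Lφ := by
    refine ContinuousLinearMap.ext fun q => ?_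
    rw [InnerProductSpace.toDual_apply_apply, hpt q, real_inner_smul_left]
  have hgrad : HasGradientAt φ (D⁻¹ • w₀) x₀ := by
    rw [hasGradientAt_iff_hasFDerivAt, htd]; exact hL
  exact ⟨hφC1, hgrad⟩
end Fol

set_option maxHeartbeats 2000000

/-- foliation by off-centric spheres. Let `v ∈ C¹` with
`v(0) = v'(0) = 0` and `0 ≤ v' ≤ 1/2` on `[0,R)`, and `V_r = −v(r)e_{n+1}`. Then there
is `φ ∈ C¹(B_R(V_R) ∖ {0})` with `0 ≤ φ < R`, whose level set `φ⁻¹(r)` is the sphere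
`∂B_r(V_r)` for `0 < r < R`; moreover `∇φ(x)/|∇φ(x)| = (x−V_{φ(x)})/|x−V_{φ(x)}|` and
`|∇φ(x) − x/|x|| ≤ 4√(v(φ(x))/φ(x) + v'(φ(x)))` on `B_R(V_R) ∖ {0}`. -/
theorem foliation_exists {n : ℕ}
    (R : ℝ) (hR : 0 < R) (v v' : ℝ → ℝ)
    (hv0 : v 0 = 0) (hv'0 : v' 0 = 0)
    (hvcont : ContinuousOn v (Icc 0 R)) (hv'cont : ContinuousOn v' (Ico 0 R))
    (hderiv : ∀ t ∈ Ioo (0:ℝ) R, HasDerivAt v (v' t) t)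
    (hv'bd : ∀ t ∈ Ico (0:ℝ) R, 0 ≤ v' t ∧ v' t ≤ 1/2) :
    ∃ φ : Eucl (n+1) → ℝ,
      ContDiffOn ℝ 1 φ (ball (vertexPt v R : Eucl (n+1)) R \ {0}) ∧
      (∀ x ∈ ball (vertexPt v R : Eucl (n+1)) R \ {0}, 0 ≤ φ x ∧ φ x < R) ∧
      (∀ r ∈ Ioo (0:ℝ) R, ∀ x ∈ ball (vertexPt v R : Eucl (n+1)) R \ {0},
        (φ x = r ↔ x ∈ Metric.sphere (vertexPt v r : Eucl (n+1)) r)) ∧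
      ∀ x ∈ ball (vertexPt v R : Eucl (n+1)) R \ {0},
        ‖gradient φ x‖⁻¹ • gradient φ x =
            ‖x - vertexPt v (φ x)‖⁻¹ • (x - vertexPt v (φ x)) ∧
        ‖gradient φ x - ‖x‖⁻¹ • x‖ ≤
            4 * Real.sqrt (v (φ x) / φ x + v' (φ x)) := by
  have HL := folLip v v' hR hvcont hderiv hv'bd
  refine ⟨folPhi v R n, ?_, ?_, ?_, ?_⟩
  · intro x hx
    exact ((folPhi_key hR hv0 hvcont hv'cont hderiv hv'bd hx).1).contDiffWithinAt
  · intro x hx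
    obtain ⟨hmem, -⟩ := folPhi_spec hR hv0 hvcont hx
    exact ⟨hmem.1.le, hmem.2⟩
  · intro r hr x hx
    obtain ⟨hmem, hroot⟩ := folPhi_spec hR hv0 hvcont hx
    constructor
    · rintro rfl
      rw [mem_sphere, dist_eq_norm, sub_vertexPt]
      exact hroot
    · intro hsph
      rw [mem_sphere, dist_eq_norm, sub_vertexPt] at hsph
      exact folPhi_root_uniq HL x ⟨hmem.1.le, hmem.2.le⟩ ⟨hr.1.le, hr.2.le⟩ hroot hsph
  · intro x hx
    obtain ⟨hmem, hroot⟩ := folPhi_spec hR hv0 hvcont hx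
    have key := (folPhi_key hR hv0 hvcont hv'cont hderiv hv'bd hx).2
    set r₀ := folPhi v R n x with hr₀def
    set w₀ := x + v r₀ • eLast n with hw₀def
    set wn := (inner ℝ w₀ (eLast n) : ℝ) with hwndef
    set D := r₀ - v' r₀ * wn with hDdef
    have hgrad_eq : gradient (folPhi v R n) x = D⁻¹ • w₀ := key.gradient
    have hr0pos : 0 < r₀ := hmem.1
    have hwnorm : ‖w₀‖ = r₀ := hroot
    have hwn : |wn| ≤ r₀ := by
      calc |wn| ≤ ‖w₀‖ * ‖eLast n‖ := abs_real_inner_le_norm _ _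
      _ = r₀ := by rw [hwnorm, norm_eLast, mul_one]
    obtain ⟨hv'0, hv'half⟩ := hv'bd r₀ ⟨hr0pos.le, hmem.2⟩
    have hD2 : r₀/2 ≤ D := by nlinarith [abs_le.mp hwn]
    have hDpos : 0 < D := by linarith
    obtain ⟨hvr0, hvrhalf⟩ : 0 ≤ v r₀ ∧ v r₀ ≤ r₀/2 := by
      obtain ⟨h1, h2⟩ := HL 0 r₀ le_rfl hr0pos.le hmem.2.le
      rw [hv0] at h1 h2
      constructor <;> linarith
    constructor
    · have hnorm : ‖(D⁻¹ • w₀ : Eucl (n+1))‖ = D⁻¹ * r₀ := by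
        rw [norm_smul, Real.norm_eq_abs, abs_of_pos (inv_pos.2 hDpos), hwnorm]
      rw [hgrad_eq, hnorm, sub_vertexPt, ← hw₀def, hwnorm, smul_smul]
      congr 1
      field_simp
    · have hxne : x ≠ 0 := by simpa using hx.2
      have hNpos : 0 < ‖x‖ := norm_pos_iff.2 hxne
      set N := ‖x‖ with hNdef
      have hwx : w₀ - x = v r₀ • eLast n := by rw [hw₀def]; module
      have hwxnorm : ‖w₀ - x‖ = v r₀ := by
        rw [hwx, norm_smul, Real.norm_eq_abs, abs_of_nonneg hvr0, norm_eLast, mul_one]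
      have hNr : |N - r₀| ≤ v r₀ := by
        have h := abs_norm_sub_norm_le x w₀
        rw [norm_sub_rev x w₀, hwxnorm, hwnorm] at h
        exact h
      have hdecomp : (D⁻¹ • w₀ : Eucl (n+1)) - N⁻¹ • x =
          (D⁻¹ - r₀⁻¹) • w₀ + r₀⁻¹ • (w₀ - x) + (r₀⁻¹ - N⁻¹) • x := by
        module
      have ht1 : ‖((D⁻¹ - r₀⁻¹) • w₀ : Eucl (n+1))‖ ≤ 2 * v' r₀ := by
        rw [norm_smul, Real.norm_eq_abs, hwnorm]
        have h1 : D⁻¹ - r₀⁻¹ = (r₀ - D)/(D * r₀) := by field_simp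
        have h2 : r₀ - D = v' r₀ * wn := by rw [hDdef]; ring
        rw [h1, h2, abs_div, abs_of_pos (mul_pos hDpos hr0pos), abs_mul,
          abs_of_nonneg hv'0, div_mul_eq_mul_div, div_le_iff₀ (mul_pos hDpos hr0pos)]
        have h4 : r₀ ≤ 2 * D := by linarith
        calc v' r₀ * |wn| * r₀ ≤ v' r₀ * r₀ * r₀ := by gcongr
          _ ≤ v' r₀ * (2*D) * r₀ := by gcongr
          _ = 2 * v' r₀ * (D * r₀) := by ring
      have ht2 : ‖(r₀⁻¹ • (w₀ - x) : Eucl (n+1))‖ ≤ v r₀ / r₀ := by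
        rw [norm_smul, Real.norm_eq_abs, abs_of_pos (inv_pos.2 hr0pos), hwxnorm]
        rw [inv_mul_eq_div]
      have ht3 : ‖((r₀⁻¹ - N⁻¹) • x : Eucl (n+1))‖ ≤ v r₀ / r₀ := by
        rw [norm_smul, Real.norm_eq_abs, ← hNdef]
        have h1 : r₀⁻¹ - N⁻¹ = (N - r₀)/(r₀ * N) := by field_simp
        rw [h1, abs_div, abs_of_pos (mul_pos hr0pos hNpos), div_mul_eq_mul_div,
          div_le_div_iff₀ (mul_pos hr0pos hNpos) hr0pos]
        nlinarith [mul_le_mul_of_nonneg_right hNr (mul_pos hNpos hr0pos).le]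
      have hs0 : 0 ≤ v r₀ / r₀ + v' r₀ := add_nonneg (div_nonneg hvr0 hr0pos.le) hv'0
      have hshalf : v r₀ / r₀ ≤ 1/2 := by rw [div_le_iff₀ hr0pos]; linarith
      have hs1 : v r₀ / r₀ + v' r₀ ≤ 1 := by linarith
      have hsq : v r₀ / r₀ + v' r₀ ≤ Real.sqrt (v r₀ / r₀ + v' r₀) := by
        rw [Real.le_sqrt hs0 hs0]
        nlinarith
      calc ‖gradient (folPhi v R n) x - ‖x‖⁻¹ • x‖
          = ‖((D⁻¹ - r₀⁻¹) • w₀ + r₀⁻¹ • (w₀ - x) + (r₀⁻¹ - N⁻¹) • x : Eucl (n+1))‖ := by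
            rw [hgrad_eq, ← hNdef, hdecomp]
        _ ≤ ‖((D⁻¹ - r₀⁻¹) • w₀ : Eucl (n+1))‖ + ‖(r₀⁻¹ • (w₀ - x) : Eucl (n+1))‖ +
              ‖((r₀⁻¹ - N⁻¹) • x : Eucl (n+1))‖ := norm_add₃_le
        _ ≤ 2 * v' r₀ + v r₀ / r₀ + v r₀ / r₀ := by
            gcongr
        _ ≤ 4 * Real.sqrt (v r₀ / r₀ + v' r₀) := by
            have hnn := Real.sqrt_nonneg (v r₀ / r₀ + v' r₀)
            linarith
end
end
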